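/- arXiv:2408.05826 — 6 statements merged into one kernel-verified Lean document; each statement's English description precedes it below -/
import Mathlib

section
/- Let N, m ≥ 1 and let P be a probability measure on Fin m → ℝ such that for every s ⊆ {1,…,m} the function x ↦ ∏_{j∈s} x_j is P-integrable. Then for every π ∈ Π(m): ∫ ∏_{p∈π} ( N⁻¹ Σ_{i : Fin N} ∏_{j∈p} Y_{i,j} ) dP^{⊗N}(Y) = Σ_{σ ∈ Π(m), σ ≥ π} ( N^{(#σ)} / N^{#π} ) · μ_σ(P), where the sum is over all coarsenings σ of π and N^{(k)} = N(N−1)⋯(N−k+1). (The integrand is the moment product μ_π of the empirical distribution of the N rows of Y.) -/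
open Finset MeasureTheory
open scoped Classical

/-- The moment `μ_s(P) = ∫ ∏_{j ∈ s} x_j dP(x)` of a measure on `Fin m → ℝ`. -/
noncomputable def moment {m : ℕ} (P : Measure (Fin m → ℝ)) (s : Finset (Fin m)) : ℝ :=
  ∫ x, ∏ j ∈ s, x j ∂P

/-- The moment product `μ_π(P) = ∏_{p ∈ π} μ_p(P)` associated with a partition `π`. -/
noncomputable def momentProd {m : ℕ} (P : Measure (Fin m → ℝ))
    (π : Finpartition (Finset.univ : Finset (Fin m))) : ℝ :=
  ∏ p ∈ π.parts, moment P p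

namespace EmpMoment

variable {m N : ℕ} (π : Finpartition (Finset.univ : Finset (Fin m)))

/-- The union of the parts assigned by `f` to the sample index `i`. -/
noncomputable def blk (f : {p // p ∈ π.parts} → Fin N) (i : Fin N) : Finset (Fin m) :=
  (Finset.univ.filter fun a => f a = i).sup fun a => (a : Finset (Fin m))

lemma subset_blk (f : {p // p ∈ π.parts} → Fin N) (a : {p // p ∈ π.parts}) :
    (a : Finset (Fin m)) ⊆ blk π f (f a) :=
  by
  show _ ≤ blk π f (f a)
  exact Finset.le_sup (mem_filter.2 ⟨mem_univ _, rfl⟩)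

lemma blk_disjoint (f : {p // p ∈ π.parts} → Fin N) {i i' : Fin N} (h : i ≠ i') :
    Disjoint (blk π f i) (blk π f i') := by
  refine Finset.disjoint_sup_left.2 fun a ha => Finset.disjoint_sup_right.2 fun b hb => ?_
  have ha' := (mem_filter.1 ha).2
  have hb' := (mem_filter.1 hb).2
  have hab : a ≠ b := by rintro rfl; exact h (ha' ▸ hb' ▸ rfl)
  exact π.disjoint a.2 b.2 (fun hc => hab (Subtype.ext hc))

lemma blk_empty {f : {p // p ∈ π.parts} → Fin N} {i : Fin N} (h : ∀ a, f a ≠ i) :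
    blk π f i = ∅ := by
  rw [blk, Finset.filter_eq_empty_iff.2 fun a _ => h a, Finset.sup_empty, Finset.bot_eq_empty]

lemma blk_nonempty {f : {p // p ∈ π.parts} → Fin N} {a : {p // p ∈ π.parts}} :
    (blk π f (f a)).Nonempty :=
  (π.nonempty_of_mem_parts a.2).mono (subset_blk π f a)

/-- The coarsening of `π` induced by `f`. -/
noncomputable def kernel (f : {p // p ∈ π.parts} → Fin N) :
    Finpartition (Finset.univ : Finset (Fin m)) :=
  Finpartition.ofErase (Finset.univ.image (blk π f))
    (by
      rw [Finset.supIndep_iff_pairwiseDisjoint]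
      intro x hx y hy hxy
      simp only [coe_image, Set.mem_image, mem_coe, mem_univ, true_and] at hx hy
      obtain ⟨i, rfl⟩ := hx
      obtain ⟨i', rfl⟩ := hy
      have : i ≠ i' := by rintro rfl; exact hxy rfl
      exact blk_disjoint π f this)
    (by
      refine Finset.Subset.antisymm (Finset.subset_univ _) fun j _ => ?_
      rw [Finset.sup_image]
      obtain ⟨p, hp, hjp⟩ := π.exists_mem (mem_univ j)
      exact Finset.mem_sup.2 ⟨f ⟨p, hp⟩, mem_univ _,
        subset_blk π f ⟨p, hp⟩ hjp⟩)

lemma kernel_parts (f : {p // p ∈ π.parts} → Fin N) :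
    (kernel π f).parts = (Finset.univ.image f).image (blk π f) := by
  ext q
  simp only [kernel, Finpartition.ofErase_parts, mem_erase, mem_image, mem_univ, true_and,
    Finset.bot_eq_empty]
  constructor
  · rintro ⟨hne, i, rfl⟩
    by_cases h : ∃ a, f a = i
    · obtain ⟨a, rfl⟩ := h
      exact ⟨f a, ⟨a, rfl⟩, rfl⟩
    · exact absurd (blk_empty π (not_exists.1 h)) hne
  · rintro ⟨i, ⟨a, rfl⟩, rfl⟩
    exact ⟨(blk_nonempty π).ne_empty, f a, rfl⟩

lemma le_kernel (f : {p // p ∈ π.parts} → Fin N) : π ≤ kernel π f := fun p hp =>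
  ⟨blk π f (f ⟨p, hp⟩), by
    rw [kernel_parts]
    exact mem_image.2 ⟨f ⟨p, hp⟩, mem_image.2 ⟨⟨p, hp⟩, mem_univ _, rfl⟩, rfl⟩,
    subset_blk π f ⟨p, hp⟩⟩


variable {σ : Finpartition (Finset.univ : Finset (Fin m))}

/-- A representative of a part of `π`. -/
noncomputable def repP (a : {p // p ∈ π.parts}) : Fin m :=
  (π.nonempty_of_mem_parts a.2).choose

lemma repP_mem (a : {p // p ∈ π.parts}) : repP π a ∈ (a : Finset (Fin m)) :=
  (π.nonempty_of_mem_parts a.2).choose_spec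

variable (σ) in
/-- The part of `σ` containing a given part of `π`. -/
noncomputable def toB (a : {p // p ∈ π.parts}) : {q // q ∈ σ.parts} :=
  ⟨σ.part (repP π a), σ.part_mem.2 (mem_univ _)⟩

variable (σ) in
/-- A part of `π` contained in a given part of `σ`. -/
noncomputable def toA (q : {q // q ∈ σ.parts}) : {p // p ∈ π.parts} :=
  ⟨π.part (repP σ q), π.part_mem.2 (mem_univ _)⟩

lemma part_subset_of_mem (hπσ : π ≤ σ) {q : Finset (Fin m)} (hq : q ∈ σ.parts) {x : Fin m}
    (hx : x ∈ q) : π.part x ⊆ q := by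
  obtain ⟨q', hq', hle⟩ := hπσ (π.part_mem.2 (mem_univ x))
  have hx' : x ∈ q' := hle (π.mem_part (mem_univ x))
  rwa [σ.eq_of_mem_parts hq' hq hx' hx] at hle

lemma subset_toB (hπσ : π ≤ σ) (a : {p // p ∈ π.parts}) :
    (a : Finset (Fin m)) ⊆ ((toB π σ a : {q // q ∈ σ.parts}) : Finset (Fin m)) := by
  obtain ⟨q, hq, hle⟩ := hπσ a.2
  have hrep : repP π a ∈ q := hle (repP_mem π a)
  show (a : Finset (Fin m)) ⊆ σ.part (repP π a)
  rwa [σ.part_eq_of_mem hq hrep]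

lemma toB_toA (hπσ : π ≤ σ) (q : {q // q ∈ σ.parts}) : toB π σ (toA π σ q) = q := by
  have h1 : ((toA π σ q : {p // p ∈ π.parts}) : Finset (Fin m)) ⊆ (q : Finset (Fin m)) :=
    part_subset_of_mem π hπσ q.2 (repP_mem σ q)
  exact Subtype.ext (σ.part_eq_of_mem q.2 (h1 (repP_mem π (toA π σ q))))

lemma blk_invFun (hπσ : π ≤ σ) (e : {q // q ∈ σ.parts} ↪ Fin N) (q : {q // q ∈ σ.parts}) :
    blk π (fun a => e (toB π σ a)) (e q) = (q : Finset (Fin m)) := by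
  refine Finset.Subset.antisymm (Finset.sup_le fun a ha => ?_) fun x hx => ?_
  · have : toB π σ a = q := e.injective (mem_filter.1 ha).2
    exact this ▸ subset_toB π hπσ a
  · set a : {p // p ∈ π.parts} := ⟨π.part x, π.part_mem.2 (mem_univ x)⟩ with ha
    have hxa : x ∈ (a : Finset (Fin m)) := π.mem_part (mem_univ x)
    have hsub : (a : Finset (Fin m)) ⊆ (q : Finset (Fin m)) :=
      part_subset_of_mem π hπσ q.2 hx
    have htoB : toB π σ a = q := Subtype.ext (σ.part_eq_of_mem q.2 (hsub (repP_mem π a)))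
    exact Finset.mem_sup.2 ⟨a, mem_filter.2 ⟨mem_univ _, congrArg e htoB⟩, hxa⟩

lemma kernel_invFun (hπσ : π ≤ σ) (e : {q // q ∈ σ.parts} ↪ Fin N) :
    kernel π (fun a => e (toB π σ a)) = σ := by
  ext1
  rw [kernel_parts]
  ext q
  simp only [mem_image, mem_univ, true_and]
  constructor
  · rintro ⟨i, ⟨a, rfl⟩, rfl⟩
    exact (blk_invFun π hπσ e (toB π σ a)) ▸ (toB π σ a).2
  · intro hq
    refine ⟨e (toB π σ (toA π σ ⟨q, hq⟩)), ⟨toA π σ ⟨q, hq⟩, rfl⟩, ?_⟩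
    rw [toB_toA π hπσ, blk_invFun π hπσ e]

lemma blk_toA {f : {p // p ∈ π.parts} → Fin N} (hf : kernel π f = σ) (q : {q // q ∈ σ.parts}) :
    (q : Finset (Fin m)) = blk π f (f (toA π σ q)) := by
  have hmem : blk π f (f (toA π σ q)) ∈ σ.parts := by
    have hmem0 : blk π f (f (toA π σ q)) ∈ (kernel π f).parts := by
      rw [kernel_parts]
      exact mem_image.2 ⟨f (toA π σ q), mem_image.2 ⟨_, mem_univ _, rfl⟩, rfl⟩
    rwa [hf] at hmem0
  have hx1 : repP σ q ∈ blk π f (f (toA π σ q)) :=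
    subset_blk π f (toA π σ q) (π.mem_part (mem_univ _))
  exact σ.eq_of_mem_parts q.2 hmem (repP_mem σ q) hx1

/-- The fiber of the kernel map over `σ` is equivalent to embeddings of `σ.parts` into `Fin N`. -/
noncomputable def fiberEquiv (hπσ : π ≤ σ) :
    {f : {p // p ∈ π.parts} → Fin N // kernel π f = σ} ≃ ({q // q ∈ σ.parts} ↪ Fin N) where
  toFun F := ⟨fun q => F.1 (toA π σ q), by
    intro q q' h
    have h' : F.1 (toA π σ q) = F.1 (toA π σ q') := h
    have h1 := blk_toA π F.2 q
    have h2 := blk_toA π F.2 q'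
    rw [h'] at h1
    exact Subtype.ext (h1.trans h2.symm)⟩
  invFun e := ⟨fun a => e (toB π σ a), kernel_invFun π hπσ e⟩
  left_inv := by
    rintro ⟨f, hf⟩
    refine Subtype.ext (funext fun a => ?_)
    show f (toA π σ (toB π σ a)) = f a
    -- the σ-part of `a` equals `blk π f (f a)`
    have hq1 : ((toB π σ a : {q // q ∈ σ.parts}) : Finset (Fin m)) = blk π f (f a) := by
      have hmem : blk π f (f a) ∈ σ.parts := by
        have hmem0 : blk π f (f a) ∈ (kernel π f).parts := by
          rw [kernel_parts]
          exact mem_image.2 ⟨f a, mem_image.2 ⟨_, mem_univ _, rfl⟩, rfl⟩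
        rwa [hf] at hmem0
      exact σ.part_eq_of_mem hmem (subset_blk π f a (repP_mem π a))
    have hx : repP σ (toB π σ a) ∈ blk π f (f a) := hq1 ▸ repP_mem σ (toB π σ a)
    obtain ⟨b, hb, hxb⟩ := Finset.mem_sup.1 hx
    have hfb : f b = f a := (mem_filter.1 hb).2
    have : toA π σ (toB π σ a) = b := Subtype.ext (π.part_eq_of_mem b.2 hxb)
    rw [this, hfb]
  right_inv := by
    intro e
    refine Function.Embedding.ext fun q => ?_
    show e (toB π σ (toA π σ q)) = e q
    rw [toB_toA π hπσ]

lemma card_fiber (hπσ : π ≤ σ) :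
    (Finset.univ.filter fun f : {p // p ∈ π.parts} → Fin N => kernel π f = σ).card
      = N.descFactorial σ.parts.card := by
  rw [← Fintype.card_subtype]
  rw [Fintype.card_congr (fiberEquiv π hπσ), Fintype.card_embedding_eq, Fintype.card_coe,
    Fintype.card_fin]


lemma moment_empty (P : Measure (Fin m → ℝ)) [IsProbabilityMeasure P] : moment P ∅ = 1 := by
  simp [moment]

lemma prod_moment_blk (P : Measure (Fin m → ℝ)) [IsProbabilityMeasure P]
    (f : {p // p ∈ π.parts} → Fin N) :
    ∏ i : Fin N, moment P (blk π f i) = momentProd P (kernel π f) := by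
  rw [momentProd, kernel_parts, Finset.prod_image]
  · symm
    apply Finset.prod_subset (Finset.subset_univ _)
    intro i _ hi
    rw [blk_empty π fun a h => hi (mem_image.2 ⟨a, mem_univ _, h⟩), moment_empty]
  · intro x hx y hy h
    by_contra hne
    obtain ⟨a, -, rfl⟩ := mem_image.1 hx
    have h1 : (blk π f (f a)).Nonempty := blk_nonempty π
    have h2 := blk_disjoint π f hne
    rw [← h] at h2
    exact h1.ne_empty (disjoint_self.1 h2)

lemma integrand_eq (Y : Fin N → Fin m → ℝ) :
    ∏ p ∈ π.parts, ((N : ℝ)⁻¹ * ∑ i : Fin N, ∏ j ∈ p, Y i j)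
      = (N : ℝ)⁻¹ ^ π.parts.card *
        ∑ f : {p // p ∈ π.parts} → Fin N, ∏ i : Fin N, ∏ j ∈ blk π f i, Y i j := by
  rw [Finset.prod_mul_distrib, Finset.prod_const]
  congr 1
  rw [← Finset.prod_coe_sort]
  rw [Fintype.prod_sum (fun (a : {p // p ∈ π.parts}) (i : Fin N) => ∏ j ∈ (a : Finset (Fin m)), Y i j)]
  refine Finset.sum_congr rfl fun f _ => ?_
  have hdisj : ∀ i : Fin N,
      (↑(Finset.univ.filter fun a : {p // p ∈ π.parts} => f a = i) :
        Set {p // p ∈ π.parts}).PairwiseDisjoint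
        (fun a => (a : Finset (Fin m))) :=
    fun i a _ b _ hab => π.disjoint a.2 b.2 fun h => hab (Subtype.ext h)
  calc ∏ a : {p // p ∈ π.parts}, ∏ j ∈ (a : Finset (Fin m)), Y (f a) j
      = ∏ i : Fin N, ∏ a ∈ Finset.univ.filter fun a => f a = i,
          ∏ j ∈ (a : Finset (Fin m)), Y (f a) j := (Finset.prod_fiberwise _ f _).symm
    _ = ∏ i : Fin N, ∏ j ∈ blk π f i, Y i j := by
        refine Finset.prod_congr rfl fun i _ => ?_
        rw [show (∏ a ∈ Finset.univ.filter fun a : {p // p ∈ π.parts} => f a = i,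
              ∏ j ∈ (a : Finset (Fin m)), Y (f a) j)
            = ∏ a ∈ Finset.univ.filter fun a : {p // p ∈ π.parts} => f a = i,
              ∏ j ∈ (a : Finset (Fin m)), Y i j from
          Finset.prod_congr rfl fun a ha => by rw [(mem_filter.1 ha).2]]
        rw [blk, Finset.sup_eq_biUnion, Finset.prod_biUnion (hdisj i)]

end EmpMoment

open EmpMoment

/-- The expectation under `N` i.i.d. samples of the moment product `μ_π` of the empirical
distribution equals `Σ_{σ ≥ π} (N^{(#σ)} / N^{#π}) · μ_σ(P)`. -/
theorem integral_empirical_momentProd (N m : ℕ) (hN : 1 ≤ N) (hm : 1 ≤ m)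
    (P : Measure (Fin m → ℝ)) [IsProbabilityMeasure P]
    (hint : ∀ s : Finset (Fin m), Integrable (fun x => ∏ j ∈ s, x j) P)
    (π : Finpartition (Finset.univ : Finset (Fin m))) :
    ∫ Y : Fin N → (Fin m → ℝ),
        ∏ p ∈ π.parts, ((N : ℝ)⁻¹ * ∑ i : Fin N, ∏ j ∈ p, Y i j)
        ∂(Measure.pi fun _ : Fin N => P)
      = ∑ σ : Finpartition (Finset.univ : Finset (Fin m)),
          (if π ≤ σ then
            ((N.descFactorial σ.parts.card : ℝ) / (N : ℝ) ^ π.parts.card) * momentProd P σ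
          else 0) := by
  letI : MeasureSpace (Fin m → ℝ) := ⟨P⟩
  haveI : IsProbabilityMeasure (volume : Measure (Fin m → ℝ)) := ‹IsProbabilityMeasure P›
  have hvol : (Measure.pi fun _ : Fin N => P) = (volume : Measure (Fin N → Fin m → ℝ)) := rfl
  rw [hvol]
  have hInt : ∀ f : {p // p ∈ π.parts} → Fin N,
      Integrable (fun Y : Fin N → Fin m → ℝ => ∏ i : Fin N, ∏ j ∈ blk π f i, Y i j) := by
    intro f
    exact Integrable.fintype_prod (f := fun i (x : Fin m → ℝ) => ∏ j ∈ blk π f i, x j)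
      fun i => hint (blk π f i)
  calc ∫ Y : Fin N → Fin m → ℝ, ∏ p ∈ π.parts, ((N : ℝ)⁻¹ * ∑ i : Fin N, ∏ j ∈ p, Y i j)
      = ∫ Y : Fin N → Fin m → ℝ, (N : ℝ)⁻¹ ^ π.parts.card *
          ∑ f : {p // p ∈ π.parts} → Fin N, ∏ i : Fin N, ∏ j ∈ blk π f i, Y i j := by
        congr 1
        funext Y
        exact integrand_eq π Y
    _ = (N : ℝ)⁻¹ ^ π.parts.card *
          ∑ f : {p // p ∈ π.parts} → Fin N,
            ∫ Y : Fin N → Fin m → ℝ, ∏ i : Fin N, ∏ j ∈ blk π f i, Y i j := by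
        rw [MeasureTheory.integral_const_mul, integral_finset_sum _ fun f _ => hInt f]
    _ = (N : ℝ)⁻¹ ^ π.parts.card *
          ∑ f : {p // p ∈ π.parts} → Fin N, momentProd P (kernel π f) := by
        congr 1
        refine Finset.sum_congr rfl fun f _ => ?_
        calc ∫ Y : Fin N → Fin m → ℝ, ∏ i : Fin N, ∏ j ∈ blk π f i, Y i j
            = ∏ i : Fin N, ∫ x : Fin m → ℝ, ∏ j ∈ blk π f i, x j :=
              MeasureTheory.integral_fintype_prod_eq_prod
                (fun i (x : Fin m → ℝ) => ∏ j ∈ blk π f i, x j)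
          _ = ∏ i : Fin N, moment P (blk π f i) := rfl
          _ = momentProd P (kernel π f) := prod_moment_blk π P f
    _ = (N : ℝ)⁻¹ ^ π.parts.card *
          ∑ σ : Finpartition (Finset.univ : Finset (Fin m)),
            ∑ f ∈ Finset.univ.filter fun f : {p // p ∈ π.parts} → Fin N => kernel π f = σ,
              momentProd P (kernel π f) := by
        rw [Finset.sum_fiberwise Finset.univ (kernel π)
          (fun f => momentProd P (kernel π f))]
    _ = ∑ σ : Finpartition (Finset.univ : Finset (Fin m)),
          (if π ≤ σ then
            ((N.descFactorial σ.parts.card : ℝ) / (N : ℝ) ^ π.parts.card) * momentProd P σ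
          else 0) := by
        rw [Finset.mul_sum]
        refine Finset.sum_congr rfl fun σ _ => ?_
        have hin : ∀ f ∈ Finset.univ.filter
            fun f : {p // p ∈ π.parts} → Fin N => kernel π f = σ,
            momentProd P (kernel π f) = momentProd P σ := fun f hf => by
          rw [(mem_filter.1 hf).2]
        rw [Finset.sum_congr rfl hin, Finset.sum_const, nsmul_eq_mul]
        by_cases hπσ : π ≤ σ
        · rw [card_fiber π hπσ, if_pos hπσ, inv_pow, div_eq_mul_inv]
          ring
        · rw [if_neg hπσ]
          have hempty : (Finset.univ.filter
              fun f : {p // p ∈ π.parts} → Fin N => kernel π f = σ) = ∅ :=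
            Finset.filter_eq_empty_iff.2 fun {f} _ h => hπσ (h ▸ le_kernel π f)
          rw [hempty]
          simp
end

section
/- Let N, m ≥ 1 and let P be a probability measure on Fin m → ℝ such that for every s ⊆ {1,…,m} the function x ↦ ∏_{j∈s} x_j is P-integrable. Then for every π ∈ Π(m) with #π ≤ N: ( N^{(#π)} )⁻¹ · ∫ Σ_{i respects π} ∏_{j=1}^m Y_{i(j), j} dP^{⊗N}(Y) = μ_π(P), where the inner sum ranges over all multi-indices i : Fin m → Fin N respecting π and N^{(k)} = N(N−1)⋯(N−k+1). In other words, the symmetric statistic associated with π is an unbiased estimator of the moment product μ_π(P). -/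
open Finset MeasureTheory
open scoped Classical

/-- Decidability of the kernel relation of a multi-index. -/
instance kerDec {m N : ℕ} (i : Fin m → Fin N) : DecidableRel (Setoid.ker i).r :=
  fun a b => decEq (i a) (i b)

/-- The kernel partition `ker i` of a multi-index `i : Fin m → Fin N`:
the partition of `Fin m` into the fibers of `i`. -/
def kerPart {m N : ℕ} (i : Fin m → Fin N) :
    Finpartition (Finset.univ : Finset (Fin m)) :=
  Finpartition.ofSetoid (Setoid.ker i)

lemma mem_part_kerPart {m N : ℕ} (i : Fin m → Fin N) (a b : Fin m) :
    b ∈ (kerPart i).part a ↔ i a = i b :=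
  Finpartition.mem_part_ofSetoid_iff_rel

lemma parts_eq_image_part {α : Type*} [Fintype α] [DecidableEq α]
    (P : Finpartition (Finset.univ : Finset α)) :
    P.parts = Finset.univ.image P.part := by
  ext p
  simp only [Finset.mem_image, Finset.mem_univ, true_and]
  constructor
  · intro hp
    obtain ⟨a, -, ha⟩ := P.part_surjOn (by exact_mod_cast hp)
    exact ⟨a, ha⟩
  · rintro ⟨a, rfl⟩
    exact P.part_mem.2 (Finset.mem_univ a)

lemma kerPart_eq_iff {m N : ℕ} (i : Fin m → Fin N)
    (π : Finpartition (Finset.univ : Finset (Fin m))) :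
    kerPart i = π ↔ ∀ a b, i a = i b ↔ π.part a = π.part b := by
  constructor
  · rintro rfl a b
    rw [← mem_part_kerPart i a b,
      (kerPart i).mem_part_iff_part_eq_part (Finset.mem_univ b) (Finset.mem_univ a)]
    exact eq_comm
  · intro h
    have hpart : ∀ a, (kerPart i).part a = π.part a := by
      intro a
      ext b
      rw [mem_part_kerPart, h a b,
        π.mem_part_iff_part_eq_part (Finset.mem_univ b) (Finset.mem_univ a)]
      exact eq_comm
    ext1
    rw [parts_eq_image_part (kerPart i), parts_eq_image_part π]
    exact Finset.image_congr fun a _ => hpart a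

lemma integral_pi_prod {ι : Type*} [Fintype ι] {E : Type*} [MeasurableSpace E]
    (μ : Measure E) [SigmaFinite μ] (f : ι → E → ℝ) :
    ∫ x : ι → E, ∏ k, f k (x k) ∂(Measure.pi fun _ => μ) = ∏ k, ∫ x, f k x ∂μ := by
  letI : MeasureSpace E := ⟨μ⟩
  haveI : SigmaFinite (volume : Measure E) := ‹SigmaFinite μ›
  have hv : (Measure.pi fun _ : ι => μ) = (volume : Measure (ι → E)) := rfl
  rw [hv]
  exact MeasureTheory.integral_fintype_prod_eq_prod f

lemma integrable_pi_prod {ι : Type*} [Fintype ι] {E : Type*} [MeasurableSpace E]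
    (μ : Measure E) [SigmaFinite μ] (f : ι → E → ℝ) (hf : ∀ k, Integrable (f k) μ) :
    Integrable (fun x : ι → E => ∏ k, f k (x k)) (Measure.pi fun _ => μ) := by
  letI : MeasureSpace E := ⟨μ⟩
  haveI : SigmaFinite (volume : Measure E) := ‹SigmaFinite μ›
  have hv : (Measure.pi fun _ : ι => μ) = (volume : Measure (ι → E)) := rfl
  rw [hv]
  exact MeasureTheory.Integrable.fintype_prod hf

lemma prod_rewrite {m N : ℕ} (i : Fin m → Fin N) (Y : Fin N → (Fin m → ℝ)) :
    ∏ j : Fin m, Y (i j) j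
      = ∏ k : Fin N, ∏ j ∈ Finset.univ.filter (fun j => i j = k), Y k j := by
  rw [← Finset.prod_fiberwise_of_maps_to (fun j _ => Finset.mem_univ (i j))
    (fun j => Y (i j) j)]
  exact Finset.prod_congr rfl fun k _ => Finset.prod_congr rfl fun j hj => by
    rw [(Finset.mem_filter.1 hj).2]

lemma moment_empty {m : ℕ} (P : Measure (Fin m → ℝ)) [IsProbabilityMeasure P] :
    moment P ∅ = 1 := by
  simp [moment]

lemma prod_moment_fiber_eq {m N : ℕ} (P : Measure (Fin m → ℝ)) [IsProbabilityMeasure P]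
    (i : Fin m → Fin N) (π : Finpartition (Finset.univ : Finset (Fin m)))
    (h : kerPart i = π) :
    ∏ k : Fin N, moment P (Finset.univ.filter fun j => i j = k) = momentProd P π := by
  have hker := (kerPart_eq_iff i π).1 h
  have hfib : ∀ a : Fin m, (Finset.univ.filter fun j => i j = i a) = π.part a := by
    intro a
    ext b
    simp only [Finset.mem_filter, Finset.mem_univ, true_and]
    rw [π.mem_part_iff_part_eq_part (Finset.mem_univ b) (Finset.mem_univ a)]
    exact hker b a
  rw [momentProd]
  rw [← Finset.prod_subset (Finset.subset_univ (Finset.univ.image i))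
    (fun k _ hk => ?_)]
  · refine Finset.prod_nbij (fun k => Finset.univ.filter fun j => i j = k)
      (fun k hk => ?_) (fun k hk k' hk' hkk' => ?_) (fun p hp => ?_) (fun k _ => rfl)
    · obtain ⟨a, -, rfl⟩ := Finset.mem_image.1 hk
      show (Finset.univ.filter fun j => i j = i a) ∈ π.parts
      rw [hfib a]
      exact π.part_mem.2 (Finset.mem_univ a)
    · obtain ⟨a, -, rfl⟩ := Finset.mem_image.1 hk
      have hkk2 : (Finset.univ.filter fun j => i j = i a)
          = Finset.univ.filter fun j => i j = k' := hkk'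
      have : a ∈ Finset.univ.filter fun j => i j = i a := by
        simp
      rw [hkk2] at this
      exact ((Finset.mem_filter.1 this).2)
    · obtain ⟨a, -, ha⟩ := π.part_surjOn hp
      exact ⟨i a, by simp [Finset.mem_image],
        show (Finset.univ.filter fun j => i j = i a) = p from (hfib a).trans ha⟩
  · have : (Finset.univ.filter fun j => i j = k) = ∅ := by
      ext b
      simp only [Finset.mem_filter, Finset.mem_univ, true_and, Finset.notMem_empty,
        iff_false]
      intro hb
      exact hk (Finset.mem_image.2 ⟨b, Finset.mem_univ b, hb⟩)
    rw [this, moment_empty]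

/-- A representative of each part. -/
noncomputable def partRep {m : ℕ} (π : Finpartition (Finset.univ : Finset (Fin m)))
    (p : ↥π.parts) : Fin m :=
  p.1.min' (π.nonempty_of_mem_parts p.2)

lemma part_partRep {m : ℕ} (π : Finpartition (Finset.univ : Finset (Fin m)))
    (p : ↥π.parts) : π.part (partRep π p) = p.1 :=
  π.part_eq_of_mem p.2 (p.1.min'_mem _)

lemma card_ker_filter {m N : ℕ} (π : Finpartition (Finset.univ : Finset (Fin m))) :
    (Finset.univ.filter fun i : Fin m → Fin N => kerPart i = π).card
      = N.descFactorial π.parts.card := by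
  have key : (Finset.univ.filter fun i : Fin m → Fin N => kerPart i = π).card
      = (Finset.univ : Finset (↥π.parts ↪ Fin N)).card := by
    refine Finset.card_bij (fun i hi => ⟨fun p => i (partRep π p), ?_⟩)
      (fun _ _ => Finset.mem_univ _) (fun i hi i' hi' hii' => ?_) (fun e _ => ?_)
    · -- injectivity of the embedding
      intro p q hpq
      have h := (kerPart_eq_iff i π).1 ((Finset.mem_filter.1 hi).2)
      have := (h (partRep π p) (partRep π q)).1 hpq
      rw [part_partRep, part_partRep] at this
      exact Subtype.ext this
    · -- injectivity of the map i ↦ embedding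
      have hke := (kerPart_eq_iff i π).1 ((Finset.mem_filter.1 hi).2)
      have hke' := (kerPart_eq_iff i' π).1 ((Finset.mem_filter.1 hi').2)
      funext j
      have hq := congrFun (congrArg (fun e : ↥π.parts ↪ Fin N => (e : ↥π.parts → Fin N))
        hii') ⟨π.part j, π.part_mem.2 (Finset.mem_univ j)⟩
      set p : ↥π.parts := ⟨π.part j, π.part_mem.2 (Finset.mem_univ j)⟩
      have hpj : π.part (partRep π p) = π.part j := part_partRep π p
      have h1 : i j = i (partRep π p) := (hke j (partRep π p)).2 hpj.symm
      have h2 : i' j = i' (partRep π p) := (hke' j (partRep π p)).2 hpj.symm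
      rw [h1, h2]
      exact hq
    · -- surjectivity
      refine ⟨fun j => e ⟨π.part j, π.part_mem.2 (Finset.mem_univ j)⟩,
        Finset.mem_filter.2 ⟨Finset.mem_univ _, ?_⟩, ?_⟩
      · rw [kerPart_eq_iff]
        intro a b
        constructor
        · intro hab
          have := e.injective hab
          exact Subtype.ext_iff.1 this
        · intro hab
          congr 1
          exact Subtype.ext hab
      · ext p
        simp only [Function.Embedding.coeFn_mk]
        have hpp : (⟨π.part (partRep π p),
            π.part_mem.2 (Finset.mem_univ _)⟩ : ↥π.parts) = p :=
          Subtype.ext (part_partRep π p)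
        exact congrArg (fun q => ((e q : Fin N) : ℕ)) hpp
  rw [key, Finset.card_univ, Fintype.card_embedding_eq, Fintype.card_fin,
    Fintype.card_coe]

/-- The symmetric statistic associated with `π` is an unbiased estimator of the moment
product `μ_π(P)`:  `(N^{(#π)})⁻¹ ∫ Σ_{ker i = π} ∏_j Y_{i(j),j} dP^{⊗N}(Y) = μ_π(P)`. -/
theorem symmetric_statistic_unbiased (N m : ℕ) (hN : 1 ≤ N) (hm : 1 ≤ m)
    (P : Measure (Fin m → ℝ)) [IsProbabilityMeasure P]
    (hint : ∀ s : Finset (Fin m), Integrable (fun x => ∏ j ∈ s, x j) P)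
    (π : Finpartition (Finset.univ : Finset (Fin m))) (hπ : π.parts.card ≤ N) :
    ((N.descFactorial π.parts.card : ℝ))⁻¹ *
      ∫ Y : Fin N → (Fin m → ℝ),
        ∑ i ∈ Finset.univ.filter (fun i : Fin m → Fin N => kerPart i = π),
          ∏ j : Fin m, Y (i j) j
        ∂(Measure.pi fun _ : Fin N => P)
      = momentProd P π := by
  have hintY : ∀ i : Fin m → Fin N,
      Integrable (fun Y : Fin N → (Fin m → ℝ) => ∏ j : Fin m, Y (i j) j)
        (Measure.pi fun _ : Fin N => P) := by
    intro i
    have : (fun Y : Fin N → (Fin m → ℝ) => ∏ j : Fin m, Y (i j) j)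
        = fun Y => ∏ k : Fin N,
            (fun x : Fin m → ℝ => ∏ j ∈ Finset.univ.filter (fun j => i j = k), x j) (Y k) :=
      funext fun Y => prod_rewrite i Y
    rw [this]
    exact integrable_pi_prod P _ fun k => hint _
  rw [integral_finset_sum _ fun i _ => hintY i]
  have hterm : ∀ i ∈ Finset.univ.filter (fun i : Fin m → Fin N => kerPart i = π),
      ∫ Y : Fin N → (Fin m → ℝ), ∏ j : Fin m, Y (i j) j ∂(Measure.pi fun _ : Fin N => P)
        = momentProd P π := by
    intro i hi
    have h1 : ∫ Y : Fin N → (Fin m → ℝ), ∏ j : Fin m, Y (i j) j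
        ∂(Measure.pi fun _ : Fin N => P)
        = ∏ k : Fin N, moment P (Finset.univ.filter fun j => i j = k) := by
      simp_rw [prod_rewrite i]
      exact integral_pi_prod P _
    rw [h1]
    exact prod_moment_fiber_eq P i π ((Finset.mem_filter.1 hi).2)
  rw [Finset.sum_congr rfl hterm, Finset.sum_const, card_ker_filter π, nsmul_eq_mul,
    ← mul_assoc, inv_mul_cancel₀, one_mul]
  exact Nat.cast_ne_zero.2 fun h0 =>
    absurd (Nat.descFactorial_eq_zero_iff_lt.1 h0) (not_lt.2 hπ)
end

section
/- For all integers N, m ≥ 1, the operator norm of Id − S induced by the ℓ¹ norm on ℝ^{Π(m)} satisfies: ‖Id − S‖₁ = 2·(1 − N^{(m)}/N^m) if m ≤ N, and ‖Id − S‖₁ = 2 if m > N. -/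
open Finset
open scoped Classical

/-- The resampling matrix `S ∈ ℝ^{Π(m)×Π(m)}`:
`S_{π,σ} = N^{(#π)} / N^{#σ}` if `σ ≤ π`, and `0` otherwise. -/
noncomputable def resampS (N m : ℕ) :
    Matrix (Finpartition (Finset.univ : Finset (Fin m)))
      (Finpartition (Finset.univ : Finset (Fin m))) ℝ :=
  fun π σ =>
    if σ ≤ π then (N.descFactorial π.parts.card : ℝ) / (N : ℝ) ^ σ.parts.card else 0

/-- The operator norm induced by the `ℓ¹` norm: `‖A‖₁ = sup_{f ≠ 0} ‖Af‖₁ / ‖f‖₁`. -/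
noncomputable def opNormL1 {ι : Type*} [Fintype ι] (A : Matrix ι ι ℝ) : ℝ :=
  ⨆ f : {f : ι → ℝ // f ≠ 0},
    (∑ π, |A.mulVec (f : ι → ℝ) π|) / (∑ π, |(f : ι → ℝ) π|)

namespace ResampAux

variable {α : Type*} [Fintype α] [DecidableEq α]

/-- A chosen element of a part. -/
noncomputable def pick (σ : Finpartition (univ : Finset α)) (b : Finset α)
    (hb : b ∈ σ.parts) : α :=
  (σ.nonempty_of_mem_parts hb).choose

lemma pick_mem (σ : Finpartition (univ : Finset α)) (b : Finset α) (hb : b ∈ σ.parts) :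
    pick σ b hb ∈ b :=
  (σ.nonempty_of_mem_parts hb).choose_spec

lemma subset_part {σ π : Finpartition (univ : Finset α)} (hσπ : σ ≤ π) {b : Finset α}
    (hb : b ∈ σ.parts) {x : α} (hx : x ∈ b) : b ⊆ π.part x := by
  obtain ⟨c, hc, hbc⟩ := hσπ hb
  rwa [π.part_eq_of_mem hc (hbc hx)]

lemma part_eq_of_mem_same {σ π : Finpartition (univ : Finset α)} (hσπ : σ ≤ π) {b : Finset α}
    (hb : b ∈ σ.parts) {x y : α} (hx : x ∈ b) (hy : y ∈ b) : π.part x = π.part y := by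
  have h1 : y ∈ π.part x := subset_part hσπ hb hx hy
  exact (π.part_eq_of_mem (π.part_mem.2 (mem_univ x)) h1).symm

lemma finpartition_eq_of_part_eq {π ρ : Finpartition (univ : Finset α)}
    (h : ∀ x, π.part x = ρ.part x) : π = ρ := by
  have aux : ∀ {π ρ : Finpartition (univ : Finset α)}, (∀ x, π.part x = ρ.part x) →
      π.parts ⊆ ρ.parts := by
    intro π ρ h b hb
    obtain ⟨x, hx⟩ := π.nonempty_of_mem_parts hb
    have e : π.part x = b := π.part_eq_of_mem hb hx
    rw [← e, h]
    exact ρ.part_mem.2 (mem_univ x)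
  exact Finpartition.ext (le_antisymm (aux h) (aux fun x => (h x).symm))

/-- The forward map of the bijection. -/
noncomputable def Phi (N : ℕ) (σ : Finpartition (univ : Finset α))
    (e : Σ π : {π : Finpartition (univ : Finset α) // σ ≤ π}, (↥π.1.parts ↪ Fin N)) :
    ↥σ.parts → Fin N :=
  fun a => e.2 ⟨e.1.1.part (pick σ a.1 a.2), e.1.1.part_mem.2 (mem_univ _)⟩

lemma Phi_apply (N : ℕ) (σ : Finpartition (univ : Finset α))
    {π : Finpartition (univ : Finset α)} (hπ : σ ≤ π) (h : ↥π.parts ↪ Fin N) (x : α) :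
    Phi N σ ⟨⟨π, hπ⟩, h⟩ ⟨σ.part x, σ.part_mem.2 (mem_univ x)⟩
      = h ⟨π.part x, π.part_mem.2 (mem_univ x)⟩ := by
  have ha := σ.part_mem.2 (mem_univ x)
  have h2 : π.part (pick σ (σ.part x) ha) = π.part x :=
    part_eq_of_mem_same hπ ha (pick_mem σ _ ha) (σ.mem_part (mem_univ x))
  exact congrArg h (Subtype.ext h2)

lemma Phi_bijective (N : ℕ) (σ : Finpartition (univ : Finset α)) :
    Function.Bijective (Phi N σ) := by
  constructor
  · rintro ⟨⟨π, hπ⟩, h⟩ ⟨⟨ρ, hρ⟩, k⟩ heq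
    have hval : ∀ x : α, h ⟨π.part x, π.part_mem.2 (mem_univ x)⟩
        = k ⟨ρ.part x, ρ.part_mem.2 (mem_univ x)⟩ := by
      intro x
      have h1 := congrFun heq ⟨σ.part x, σ.part_mem.2 (mem_univ x)⟩
      rwa [Phi_apply N σ hπ h x, Phi_apply N σ hρ k x] at h1
    have hpr : π = ρ := by
      apply finpartition_eq_of_part_eq
      intro x
      ext y
      rw [π.mem_part_iff_part_eq_part (mem_univ y) (mem_univ x),
          ρ.mem_part_iff_part_eq_part (mem_univ y) (mem_univ x)]
      constructor
      · intro hyx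
        have e : (⟨ρ.part y, ρ.part_mem.2 (mem_univ y)⟩ : ↥ρ.parts)
            = ⟨ρ.part x, ρ.part_mem.2 (mem_univ x)⟩ :=
          k.injective (by rw [← hval y, ← hval x]; exact congrArg h (Subtype.ext hyx))
        exact congrArg Subtype.val e
      · intro hyx
        have e : (⟨π.part y, π.part_mem.2 (mem_univ y)⟩ : ↥π.parts)
            = ⟨π.part x, π.part_mem.2 (mem_univ x)⟩ :=
          h.injective (by rw [hval y, hval x]; exact congrArg k (Subtype.ext hyx))
        exact congrArg Subtype.val e
    subst hpr
    have hk : h = k := by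
      apply DFunLike.ext
      rintro ⟨b, hb⟩
      have hx : pick π b hb ∈ b := pick_mem π b hb
      have e1 : π.part (pick π b hb) = b := π.part_eq_of_mem hb hx
      have := hval (pick π b hb)
      rwa [show (⟨π.part (pick π b hb), π.part_mem.2 (mem_univ _)⟩ : ↥π.parts) = ⟨b, hb⟩ from
        Subtype.ext e1] at this
    subst hk
    rfl
  · intro g
    set f : α → Fin N := fun x => g ⟨σ.part x, σ.part_mem.2 (mem_univ x)⟩ with hf
    haveI : DecidableRel (Setoid.ker f).r := fun a b => by
      change Decidable (f a = f b); infer_instance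
    set π : Finpartition (univ : Finset α) := Finpartition.ofSetoid (Setoid.ker f) with hπdef
    have hrel : ∀ x y : α, y ∈ π.part x ↔ f x = f y := fun x y =>
      Finpartition.mem_part_ofSetoid_iff_rel
    have hσπ : σ ≤ π := by
      intro b hb
      obtain ⟨x, hx⟩ := σ.nonempty_of_mem_parts hb
      refine ⟨π.part x, π.part_mem.2 (mem_univ x), fun y hy => ?_⟩
      rw [hrel]
      show g _ = g _
      congr 1
      exact Subtype.ext ((σ.part_eq_of_mem hb hx).trans (σ.part_eq_of_mem hb hy).symm)
    have hinj : Function.Injective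
        (fun b : ↥π.parts => f (pick π b.1 b.2)) := by
      rintro ⟨b, hb⟩ ⟨c, hc⟩ hbc
      have h1 : pick π c hc ∈ π.part (pick π b hb) := (hrel _ _).2 hbc
      have h2 : π.part (pick π b hb) = b := π.part_eq_of_mem hb (pick_mem π b hb)
      rw [h2] at h1
      exact Subtype.ext (π.eq_of_mem_parts hb hc h1 (pick_mem π c hc))
    refine ⟨⟨⟨π, hσπ⟩, ⟨fun b => f (pick π b.1 b.2), hinj⟩⟩, ?_⟩
    funext a
    obtain ⟨b, hb⟩ := a
    have hx : pick σ b hb ∈ b := pick_mem σ b hb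
    have hb' : σ.part (pick σ b hb) = b := σ.part_eq_of_mem hb hx
    have h1 : Phi N σ ⟨⟨π, hσπ⟩, ⟨fun b => f (pick π b.1 b.2), hinj⟩⟩ ⟨b, hb⟩
        = f (pick π (π.part (pick σ b hb)) (π.part_mem.2 (mem_univ _))) := rfl
    rw [h1]
    have h2 : f (pick σ b hb)
        = f (pick π (π.part (pick σ b hb)) (π.part_mem.2 (mem_univ _))) :=
      (hrel _ _).1 (pick_mem π _ (π.part_mem.2 (mem_univ _)))
    rw [← h2, hf]
    show g _ = g _
    congr 1
    exact Subtype.ext hb'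

lemma key (N : ℕ) (σ : Finpartition (univ : Finset α)) :
    ∑ π ∈ univ.filter (fun π : Finpartition (univ : Finset α) => σ ≤ π),
      N.descFactorial π.parts.card = N ^ σ.parts.card := by
  calc ∑ π ∈ univ.filter (fun π : Finpartition (univ : Finset α) => σ ≤ π),
        N.descFactorial π.parts.card
      = ∑ π : {π : Finpartition (univ : Finset α) // σ ≤ π},
          N.descFactorial π.1.parts.card :=
        Finset.sum_subtype _ (by simp) _
    _ = ∑ π : {π : Finpartition (univ : Finset α) // σ ≤ π},
          Fintype.card (↥π.1.parts ↪ Fin N) := by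
        simp [Fintype.card_embedding_eq, Fintype.card_coe]
    _ = Fintype.card (Σ π : {π : Finpartition (univ : Finset α) // σ ≤ π},
          (↥π.1.parts ↪ Fin N)) := (Fintype.card_sigma).symm
    _ = Fintype.card (↥σ.parts → Fin N) := Fintype.card_of_bijective (Phi_bijective N σ)
    _ = N ^ σ.parts.card := by simp [Fintype.card_fun, Fintype.card_coe]

end ResampAux

lemma ratio_antitone (N : ℕ) (hN : 1 ≤ N) :
    Antitone (fun k => (N.descFactorial k : ℝ) / (N : ℝ) ^ k) := by
  apply antitone_nat_of_succ_le
  intro k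
  have hN0 : (0:ℝ) < (N:ℝ) := by exact_mod_cast hN
  simp only [Nat.descFactorial_succ, pow_succ, Nat.cast_mul]
  rw [div_le_div_iff₀ (by positivity) (by positivity)]
  have h1 : ((N - k : ℕ):ℝ) ≤ (N:ℝ) := by exact_mod_cast Nat.sub_le N k
  have h2 : (0:ℝ) ≤ (N.descFactorial k : ℝ) := by positivity
  have h3 : (0:ℝ) ≤ (N:ℝ)^k := by positivity
  nlinarith [mul_le_mul_of_nonneg_right (mul_le_mul_of_nonneg_right h1 h2) h3]

lemma colsum (N m : ℕ) (hN : 1 ≤ N) (σ : Finpartition (univ : Finset (Fin m))) :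
    ∑ π, |(1 - resampS N m) π σ|
      = 2 * (1 - (N.descFactorial σ.parts.card : ℝ) / (N : ℝ) ^ σ.parts.card) := by
  have hNpos : (0:ℝ) < (N:ℝ) ^ σ.parts.card := by
    have : (0:ℝ) < (N:ℝ) := by exact_mod_cast hN
    positivity
  set d : ℝ := (N.descFactorial σ.parts.card : ℝ) / (N : ℝ) ^ σ.parts.card with hd
  have hdσ : resampS N m σ σ = d := by simp [resampS, hd]
  have hd1 : d ≤ 1 := by
    rw [hd, div_le_one hNpos]
    exact_mod_cast Nat.descFactorial_le_pow N σ.parts.card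
  have hd0 : 0 ≤ d := by positivity
  have hS : ∑ π, resampS N m π σ = 1 := by
    have e1 : ∑ π, resampS N m π σ
        = ∑ π ∈ univ.filter (fun π : Finpartition (univ : Finset (Fin m)) => σ ≤ π),
            (N.descFactorial π.parts.card : ℝ) / (N : ℝ) ^ σ.parts.card := by
      rw [Finset.sum_filter]
      rfl
    rw [e1, ← Finset.sum_div, ← Nat.cast_sum, ResampAux.key N σ, Nat.cast_pow,
        div_self (ne_of_gt hNpos)]
  have habs : ∀ π, |(1 - resampS N m) π σ|
      = (if π = σ then (1:ℝ) - 2 * resampS N m π σ else 0) + resampS N m π σ := by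
    intro π
    have hnn : 0 ≤ resampS N m π σ := by
      unfold resampS
      split
      · positivity
      · exact le_rfl
    by_cases hπ : π = σ
    · subst hπ
      rw [Matrix.sub_apply, Matrix.one_apply_eq, if_pos rfl, hdσ,
        abs_of_nonneg (by linarith : (0:ℝ) ≤ 1 - d)]
      ring
    · simp only [Matrix.sub_apply, Matrix.one_apply_ne hπ, if_neg hπ]
      rw [zero_sub, abs_neg, abs_of_nonneg hnn, zero_add]
  calc ∑ π, |(1 - resampS N m) π σ|
      = ∑ π, ((if π = σ then (1:ℝ) - 2 * resampS N m π σ else 0) + resampS N m π σ) := by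
        exact Finset.sum_congr rfl fun π _ => habs π
    _ = (1 - 2 * resampS N m σ σ) + 1 := by
        rw [Finset.sum_add_distrib, Finset.sum_ite_eq' univ σ
          (fun π => (1:ℝ) - 2 * resampS N m π σ), if_pos (mem_univ σ), hS]
    _ = 2 * (1 - d) := by rw [hdσ]; ring

/-- The `ℓ¹`-induced operator norm of `Id − S` equals `2·(1 − N^{(m)}/N^m)` when `m ≤ N`,
and `2` when `m > N`. -/
theorem opNormL1_one_sub_resampS (N m : ℕ) (hN : 1 ≤ N) (hm : 1 ≤ m) :
    opNormL1 (1 - resampS N m) =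
      if m ≤ N then 2 * (1 - (N.descFactorial m : ℝ) / (N : ℝ) ^ m) else 2 := by
  set A := 1 - resampS N m with hA
  set C : ℝ := 2 * (1 - (N.descFactorial m : ℝ) / (N : ℝ) ^ m) with hC
  have hbot : (⊥ : Finpartition (univ : Finset (Fin m))).parts.card = m := by
    rw [Finpartition.card_bot]; simp
  have hcols : ∀ σ : Finpartition (univ : Finset (Fin m)), ∑ π, |A π σ| ≤ C := by
    intro σ
    rw [hA, colsum N m hN σ, hC]
    have hr := ratio_antitone N hN (by simpa using σ.card_parts_le_card :
      σ.parts.card ≤ m)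
    simp only at hr
    linarith
  have hub : ∀ f : Finpartition (univ : Finset (Fin m)) → ℝ,
      ∑ π, |A.mulVec f π| ≤ C * ∑ π, |f π| := by
    intro f
    calc ∑ π, |A.mulVec f π| ≤ ∑ π, ∑ σ, |A π σ| * |f σ| := by
          apply Finset.sum_le_sum
          intro π _
          rw [Matrix.mulVec, dotProduct]
          refine (Finset.abs_sum_le_sum_abs _ _).trans (le_of_eq ?_)
          simp [abs_mul]
      _ = ∑ σ, (∑ π, |A π σ|) * |f σ| := by
          rw [Finset.sum_comm]
          simp [Finset.sum_mul]
      _ ≤ ∑ σ, C * |f σ| := by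
          apply Finset.sum_le_sum
          intro σ _
          exact mul_le_mul_of_nonneg_right (hcols σ) (abs_nonneg _)
      _ = C * ∑ π, |f π| := by rw [Finset.mul_sum]
  set f0 : Finpartition (univ : Finset (Fin m)) → ℝ :=
    fun π => if π = ⊥ then (1:ℝ) else 0 with hf0def
  have hf0 : f0 ≠ 0 := by
    intro h
    have := congrFun h ⊥
    simp [hf0def] at this
  have hsum0 : ∑ π, |f0 π| = 1 := by
    simp [hf0def, apply_ite abs]
  have hmul0 : ∀ π, A.mulVec f0 π = A π ⊥ := by
    intro π
    rw [Matrix.mulVec, dotProduct]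
    simp [hf0def, mul_ite]
  have hwit : ∑ π, |A.mulVec f0 π| = C := by
    simp_rw [hmul0]
    rw [hA, colsum N m hN ⊥, hbot]
  haveI : Nonempty {f : Finpartition (univ : Finset (Fin m)) → ℝ // f ≠ 0} := ⟨⟨f0, hf0⟩⟩
  have hpos : ∀ f : Finpartition (univ : Finset (Fin m)) → ℝ, f ≠ 0 →
      0 < ∑ π, |f π| := by
    intro f hf
    obtain ⟨π, hπ⟩ := Function.ne_iff.1 hf
    exact Finset.sum_pos' (fun _ _ => abs_nonneg _) ⟨π, mem_univ π, abs_pos.2 hπ⟩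
  have hval : opNormL1 A = C := by
    rw [opNormL1]
    apply le_antisymm
    · apply ciSup_le
      rintro ⟨f, hf⟩
      rw [div_le_iff₀ (hpos f hf)]
      exact hub f
    · have hbdd : BddAbove (Set.range fun f : {f : Finpartition (univ : Finset (Fin m)) → ℝ // f ≠ 0} =>
          (∑ π, |A.mulVec (f : Finpartition (univ : Finset (Fin m)) → ℝ) π|) /
            (∑ π, |(f : Finpartition (univ : Finset (Fin m)) → ℝ) π|)) := by
        refine ⟨C, ?_⟩
        rintro x ⟨⟨f, hf⟩, rfl⟩
        rw [div_le_iff₀ (hpos f hf)]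
        exact hub f
      have h1 := le_ciSup hbdd (⟨f0, hf0⟩ : {f : Finpartition (univ : Finset (Fin m)) → ℝ // f ≠ 0})
      rw [hwit, hsum0, div_one] at h1
      exact h1
  rw [hval]
  by_cases hmn : m ≤ N
  · rw [if_pos hmn, hC]
  · rw [if_neg hmn, hC, Nat.descFactorial_eq_zero_iff_lt.2 (not_le.1 hmn)]
    norm_num
end

section
/- Let m ≥ 1, N be integers with N ≥ 8·m² and N ≥ m + 1. Then N^{(m)}/N^m ≥ 3/4, and consequently the resampling matrix S on ℝ^{Π(m)} satisfies ‖Id − S‖₁ ≤ 1/2, where ‖·‖₁ is the operator norm induced by the ℓ¹ norm on ℝ^{Π(m)}. -/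
open Finset
open scoped Classical

section Helpers


variable {m N : ℕ}

/-- Ratio bound: `3/4 ≤ N^{(k)}/N^k` when `k ≤ N` and `8 k² ≤ N`. -/
lemma ratio_ge (N k : ℕ) (hN0 : 0 < N) (hk : k ≤ N) (h8 : 8 * k ^ 2 ≤ N) :
    (3 / 4 : ℝ) ≤ (N.descFactorial k : ℝ) / (N : ℝ) ^ k := by
  have hNpos : (0 : ℝ) < N := by exact_mod_cast hN0
  have hkN : (k : ℝ) ≤ N := by exact_mod_cast hk
  have h8' : 8 * (k : ℝ) ^ 2 ≤ N := by exact_mod_cast h8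
  rw [le_div_iff₀ (by positivity)]
  have hcast : (N.descFactorial k : ℝ) = ∏ i ∈ range k, ((N : ℝ) - i) := by
    rw [Nat.descFactorial_eq_prod_range]
    push_cast
    refine Finset.prod_congr rfl fun i hi => ?_
    rw [Nat.cast_sub (le_of_lt (lt_of_lt_of_le (mem_range.1 hi) hk))]
  have hstep1 : ((N : ℝ) - k) ^ k ≤ ∏ i ∈ range k, ((N : ℝ) - i) := by
    have hc : ∏ _i ∈ range k, ((N : ℝ) - k) = ((N : ℝ) - k) ^ k := by
      simp [Finset.prod_const]
    rw [← hc]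
    refine Finset.prod_le_prod (fun i _ => by linarith) (fun i hi => ?_)
    have : (i : ℝ) ≤ k := by exact_mod_cast (le_of_lt (mem_range.1 hi))
    linarith
  have hb : (1 : ℝ) - k * (k / N) ≤ (1 - k / N) ^ k := by
    have h2 : (-2 : ℝ) ≤ -((k : ℝ) / N) := by
      rw [neg_le_neg_iff, div_le_iff₀ hNpos]
      nlinarith
    have := one_add_mul_le_pow h2 k
    have e1 : (1 : ℝ) + -((k : ℝ) / N) = 1 - k / N := by ring
    have e2 : (1 : ℝ) + (k : ℝ) * -((k : ℝ) / N) = 1 - k * (k / N) := by ring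
    rw [e1, e2] at this
    exact this
  have h78 : (3 / 4 : ℝ) ≤ 1 - k * (k / N) := by
    have : (k : ℝ) * ((k : ℝ) / N) ≤ 1 / 8 := by
      rw [mul_div_assoc', div_le_div_iff₀ hNpos (by norm_num)]
      nlinarith
    linarith
  have hpow : ((1 : ℝ) - k / N) ^ k * (N : ℝ) ^ k = ((N : ℝ) - k) ^ k := by
    rw [← mul_pow]
    congr 1
    field_simp
  have hNk0 : (0 : ℝ) ≤ (N : ℝ) ^ k := by positivity
  calc (3 / 4 : ℝ) * (N : ℝ) ^ k ≤ ((1 : ℝ) - k / N) ^ k * (N : ℝ) ^ k := by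
        refine mul_le_mul_of_nonneg_right ?_ hNk0
        exact h78.trans hb
    _ = ((N : ℝ) - k) ^ k := hpow
    _ ≤ ∏ i ∈ range k, ((N : ℝ) - i) := hstep1
    _ = (N.descFactorial k : ℝ) := hcast.symm



variable {m : ℕ}

lemma part_subset_part {σ π : Finpartition (univ : Finset (Fin m))} (h : σ ≤ π) (x : Fin m) :
    σ.part x ⊆ π.part x := by
  obtain ⟨c, hc, hsub⟩ := h (σ.part_mem.2 (mem_univ x))
  have hx : x ∈ c := hsub (σ.mem_part (mem_univ x))
  rw [π.part_eq_of_mem hc hx]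
  exact hsub

/-- pick an element of a part -/
noncomputable def pick (σ : Finpartition (univ : Finset (Fin m))) (b : ↥σ.parts) : Fin m :=
  (σ.nonempty_of_mem_parts b.2).choose

lemma pick_mem (σ : Finpartition (univ : Finset (Fin m))) (b : ↥σ.parts) :
    pick σ b ∈ (b : Finset (Fin m)) :=
  (σ.nonempty_of_mem_parts b.2).choose_spec

/-- The injection. -/
noncomputable def Phi (N : ℕ) (σ : Finpartition (univ : Finset (Fin m)))
    (t : Σ π : Finpartition (univ : Finset (Fin m)), {_g : ↥π.parts ↪ Fin N // σ ≤ π}) :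
    ↥σ.parts → Fin N :=
  fun b => t.2.1 ⟨t.1.part (pick σ b), t.1.part_mem.2 (mem_univ _)⟩

lemma Phi_part (N : ℕ) (σ : Finpartition (univ : Finset (Fin m)))
    (t : Σ π : Finpartition (univ : Finset (Fin m)), {_g : ↥π.parts ↪ Fin N // σ ≤ π})
    (x : Fin m) :
    Phi N σ t ⟨σ.part x, σ.part_mem.2 (mem_univ x)⟩
      = t.2.1 ⟨t.1.part x, t.1.part_mem.2 (mem_univ x)⟩ := by
  obtain ⟨π, g, h⟩ := t
  have hz : pick σ ⟨σ.part x, σ.part_mem.2 (mem_univ x)⟩ ∈ σ.part x :=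
    pick_mem σ ⟨σ.part x, σ.part_mem.2 (mem_univ x)⟩
  have hz' : pick σ ⟨σ.part x, σ.part_mem.2 (mem_univ x)⟩ ∈ π.part x :=
    part_subset_part h x hz
  have : π.part (pick σ ⟨σ.part x, σ.part_mem.2 (mem_univ x)⟩) = π.part x :=
    π.part_eq_of_mem (π.part_mem.2 (mem_univ x)) hz'
  exact congrArg g (Subtype.ext this)

lemma Phi_injective (N : ℕ) (σ : Finpartition (univ : Finset (Fin m))) :
    Function.Injective (Phi N σ) := by
  rintro ⟨π₁, g₁, h₁⟩ ⟨π₂, g₂, h₂⟩ heq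
  have key : ∀ (π : Finpartition (univ : Finset (Fin m)))
      (g : ↥π.parts ↪ Fin N) (h : σ ≤ π) (x y : Fin m),
      (y ∈ π.part x ↔ Phi N σ ⟨π, g, h⟩ ⟨σ.part y, σ.part_mem.2 (mem_univ y)⟩
        = Phi N σ ⟨π, g, h⟩ ⟨σ.part x, σ.part_mem.2 (mem_univ x)⟩) := by
    intro π g h x y
    rw [Phi_part, Phi_part]
    dsimp only
    rw [π.mem_part_iff_part_eq_part (mem_univ y) (mem_univ x)]
    constructor
    · intro hpp
      exact congrArg g (Subtype.ext hpp)
    · intro hgg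
      exact Subtype.ext_iff.1 (g.injective hgg)
  have hpt : ∀ x : Fin m, π₁.part x = π₂.part x := by
    intro x
    ext y
    rw [key π₁ g₁ h₁ x y, key π₂ g₂ h₂ x y, heq]
  have hparts : π₁ = π₂ := by
    have hsub : ∀ (a b : Finpartition (univ : Finset (Fin m))),
        (∀ x, a.part x = b.part x) → a.parts ⊆ b.parts := by
      intro a b hab P hP
      obtain ⟨x, hx⟩ := a.nonempty_of_mem_parts hP
      have : P = a.part x := (a.part_eq_of_mem hP hx).symm
      rw [this, hab x]
      exact b.part_mem.2 (mem_univ x)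
    exact Finpartition.ext (le_antisymm (hsub _ _ hpt) (hsub _ _ fun x => (hpt x).symm))
  subst hparts
  have hgg : g₁ = g₂ := by
    ext P
    obtain ⟨x, hx⟩ := π₁.nonempty_of_mem_parts P.2
    have hPx : (P : Finset (Fin m)) = π₁.part x := (π₁.part_eq_of_mem P.2 hx).symm
    have e1 : g₁ P = g₁ ⟨π₁.part x, π₁.part_mem.2 (mem_univ x)⟩ := congrArg g₁ (Subtype.ext hPx)
    have e2 : g₂ P = g₂ ⟨π₁.part x, π₁.part_mem.2 (mem_univ x)⟩ := congrArg g₂ (Subtype.ext hPx)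
    rw [e1, e2, ← Phi_part N σ ⟨π₁, g₁, h₁⟩ x, ← Phi_part N σ ⟨π₁, g₂, h₂⟩ x, heq]
  subst hgg
  rfl

lemma sum_descFactorial_le (N : ℕ) (σ : Finpartition (univ : Finset (Fin m))) :
    ∑ π ∈ univ.filter (fun π : Finpartition (univ : Finset (Fin m)) => σ ≤ π),
      N.descFactorial π.parts.card ≤ N ^ σ.parts.card := by
  calc ∑ π ∈ univ.filter (fun π : Finpartition (univ : Finset (Fin m)) => σ ≤ π),
        N.descFactorial π.parts.card
      = ∑ π ∈ univ.filter (fun π : Finpartition (univ : Finset (Fin m)) => σ ≤ π),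
        Fintype.card {_g : ↥π.parts ↪ Fin N // σ ≤ π} := by
        refine Finset.sum_congr rfl fun π hπ => ?_
        have hσπ : σ ≤ π := (mem_filter.1 hπ).2
        rw [Fintype.card_congr (Equiv.subtypeUnivEquiv fun _ => hσπ),
          Fintype.card_embedding_eq, Fintype.card_coe, Fintype.card_fin]
    _ ≤ ∑ π : Finpartition (univ : Finset (Fin m)),
        Fintype.card {_g : ↥π.parts ↪ Fin N // σ ≤ π} :=
        Finset.sum_le_sum_of_subset (filter_subset _ _)
    _ = Fintype.card (Σ π : Finpartition (univ : Finset (Fin m)),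
        {_g : ↥π.parts ↪ Fin N // σ ≤ π}) := (Fintype.card_sigma).symm
    _ ≤ Fintype.card (↥σ.parts → Fin N) :=
        Fintype.card_le_of_injective _ (Phi_injective N σ)
    _ = N ^ σ.parts.card := by
        rw [Fintype.card_fun, Fintype.card_coe, Fintype.card_fin]

lemma colsum_le {m N : ℕ} (hN₁ : 8 * m ^ 2 ≤ N) (hN₂ : m + 1 ≤ N)
    (σ : Finpartition (univ : Finset (Fin m))) :
    ∑ π, |(1 - resampS N m) π σ| ≤ 1 / 2 := by
  have hN0 : 0 < N := lt_of_lt_of_le (Nat.succ_pos m) hN₂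
  have hNpos : (0 : ℝ) < N := by exact_mod_cast hN0
  set k := σ.parts.card with hkdef
  have hkm : k ≤ m := le_trans σ.card_parts_le_card (by simp)
  have hkN : k ≤ N := le_trans hkm (le_trans (Nat.le_succ m) hN₂)
  have h8k : 8 * k ^ 2 ≤ N := le_trans (by nlinarith) hN₁
  set r : ℝ := (N.descFactorial k : ℝ) / (N : ℝ) ^ k with hrdef
  have hpowpos : (0 : ℝ) < (N : ℝ) ^ k := by positivity
  have hr34 : (3 / 4 : ℝ) ≤ r := ratio_ge N k hN0 hkN h8k
  have hr1 : r ≤ 1 := by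
    rw [hrdef, div_le_one hpowpos]
    exact_mod_cast Nat.descFactorial_le_pow N k
  rw [← Finset.add_sum_erase _ _ (mem_univ σ)]
  have hdiag : (1 - resampS N m) σ σ = 1 - r := by
    simp [Matrix.sub_apply, Matrix.one_apply_eq, resampS, hrdef, ← hkdef]
  have hoff : ∀ π ∈ univ.erase σ, |(1 - resampS N m) π σ| = resampS N m π σ := by
    intro π hπ
    have hne : π ≠ σ := (mem_erase.1 hπ).1
    have h0 : (1 : Matrix _ _ ℝ) π σ = 0 := Matrix.one_apply_ne hne
    have hnn : 0 ≤ resampS N m π σ := by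
      unfold resampS
      split
      · positivity
      · exact le_rfl
    rw [Matrix.sub_apply, h0, zero_sub, abs_neg, abs_of_nonneg hnn]
  rw [Finset.sum_congr rfl hoff, hdiag, abs_of_nonneg (by linarith)]
  have hσmem : σ ∈ univ.filter (fun π : Finpartition (univ : Finset (Fin m)) => σ ≤ π) := by
    simp
  have hfiltersum :
      ∑ π ∈ univ.filter (fun π : Finpartition (univ : Finset (Fin m)) => σ ≤ π),
        (N.descFactorial π.parts.card : ℝ) / (N : ℝ) ^ k ≤ 1 := by
    rw [← Finset.sum_div, div_le_one hpowpos]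
    have := sum_descFactorial_le N σ
    calc ∑ π ∈ univ.filter (fun π : Finpartition (univ : Finset (Fin m)) => σ ≤ π),
          ((N.descFactorial π.parts.card : ℝ))
        = ((∑ π ∈ univ.filter (fun π : Finpartition (univ : Finset (Fin m)) => σ ≤ π),
            N.descFactorial π.parts.card : ℕ) : ℝ) := by push_cast; rfl
      _ ≤ ((N ^ k : ℕ) : ℝ) := by exact_mod_cast this
      _ = (N : ℝ) ^ k := by push_cast; rfl
  have hsum : ∑ π ∈ univ.erase σ, resampS N m π σ ≤ 1 - r := by
    have e1 : ∑ π ∈ univ.erase σ, resampS N m π σ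
        = ∑ π ∈ ((univ.filter (fun π : Finpartition (univ : Finset (Fin m)) => σ ≤ π)).erase σ),
            (N.descFactorial π.parts.card : ℝ) / (N : ℝ) ^ k := by
      rw [← Finset.filter_erase, Finset.sum_filter]
      rfl
    have e2 := Finset.add_sum_erase _
      (fun π : Finpartition (univ : Finset (Fin m)) =>
        (N.descFactorial π.parts.card : ℝ) / (N : ℝ) ^ k) hσmem
    rw [← hkdef] at e2
    rw [e1]
    have := hfiltersum
    rw [← e2] at this
    linarith [this]
  linarith

end Helpers

/-- For `N ≥ 8·m²` and `N ≥ m + 1` we have `N^{(m)}/N^m ≥ 3/4`, and consequently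
`‖Id − S‖₁ ≤ 1/2`. -/
theorem linear_convergence_regime (m N : ℕ) (hm : 1 ≤ m)
    (hN₁ : 8 * m ^ 2 ≤ N) (hN₂ : m + 1 ≤ N) :
    (3 / 4 : ℝ) ≤ (N.descFactorial m : ℝ) / (N : ℝ) ^ m ∧
    opNormL1 (1 - resampS N m) ≤ 1 / 2 := by
  have hN0 : 0 < N := lt_of_lt_of_le (Nat.succ_pos m) hN₂
  constructor
  · exact ratio_ge N m hN0 (le_trans (Nat.le_succ m) hN₂) hN₁
  · rw [opNormL1]
    refine Real.iSup_le (fun f => ?_) (by norm_num)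
    obtain ⟨g, hg⟩ := f
    dsimp only
    have hden : 0 < ∑ π, |g π| := by
      obtain ⟨π₀, h0⟩ := Function.ne_iff.1 hg
      have h1 : 0 < |g π₀| := abs_pos.2 h0
      have h2 : |g π₀| ≤ ∑ π, |g π| :=
        Finset.single_le_sum (f := fun π => |g π|) (fun i _ => abs_nonneg (g i)) (mem_univ π₀)
      linarith
    rw [div_le_iff₀ hden]
    calc ∑ π, |(1 - resampS N m).mulVec g π|
        ≤ ∑ π, ∑ σ', |(1 - resampS N m) π σ'| * |g σ'| := by
          refine Finset.sum_le_sum fun π _ => ?_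
          simp only [Matrix.mulVec, dotProduct]
          refine le_trans (Finset.abs_sum_le_sum_abs _ _) ?_
          exact le_of_eq (Finset.sum_congr rfl fun σ' _ => abs_mul _ _)
      _ = ∑ σ', (∑ π, |(1 - resampS N m) π σ'|) * |g σ'| := by
          rw [Finset.sum_comm]
          simp [Finset.sum_mul]
      _ ≤ ∑ σ', (1 / 2 : ℝ) * |g σ'| := by
          refine Finset.sum_le_sum fun σ' _ => ?_
          exact mul_le_mul_of_nonneg_right (colsum_le hN₁ hN₂ σ') (abs_nonneg _)
      _ = 1 / 2 * ∑ π, |g π| := by rw [Finset.mul_sum]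
end

section
/- Let N : ℕ → ℕ be a sequence with N(m) ≥ m + 1 for all m ≥ 1 and N(m)/m² → 0 as m → ∞. Then N(m)^{(m)}/N(m)^m = (N(m)!/(N(m)−m)!)/N(m)^m → 0 as m → ∞; consequently, for the resampling matrix S = S(N(m), m) on ℝ^{Π(m)}, ‖Id − S‖₁ = 2·(1 − N(m)^{(m)}/N(m)^m) → 2, so the iterated bootstrap does not converge at a linear rate independent of m unless N grows at least quadratically with m. -/
open Finset Filter
open scoped Classical Topology

namespace ResampAux

variable {α : Type*} [Fintype α] [DecidableEq α]

/-- kernel finpartition of a function -/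
noncomputable def kerPart {β : Type*} (F : α → β) : Finpartition (univ : Finset α) :=
  Finpartition.ofSetoid (Setoid.ker F)

lemma mem_part_kerPart {β : Type*} {F : α → β} {a b : α} :
    b ∈ (kerPart F).part a ↔ F a = F b :=
  Finpartition.mem_part_ofSetoid_iff_rel

lemma part_kerPart_eq_iff {β : Type*} {F : α → β} {a b : α} :
    (kerPart F).part a = (kerPart F).part b ↔ F a = F b := by
  constructor
  · intro h
    have hb : b ∈ (kerPart F).part a := by
      rw [h]; exact (kerPart F).mem_part (mem_univ b)
    exact (mem_part_kerPart (F := F) (a := a) (b := b)).mp hb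
  · intro h
    exact (kerPart F).part_eq_of_mem ((kerPart F).part_mem.2 (mem_univ b))
      (mem_part_kerPart.mpr h.symm)

lemma finpartition_ext_part {P Q : Finpartition (univ : Finset α)}
    (h : ∀ x, P.part x = Q.part x) : P = Q := by
  ext B
  constructor
  · intro hB
    obtain ⟨b, hb⟩ := P.nonempty_of_mem_parts hB
    have : P.part b = B := P.part_eq_of_mem hB hb
    rw [← this, h b]
    exact Q.part_mem.2 (mem_univ b)
  · intro hB
    obtain ⟨b, hb⟩ := Q.nonempty_of_mem_parts hB
    have : Q.part b = B := Q.part_eq_of_mem hB hb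
    rw [← this, ← h b]
    exact P.part_mem.2 (mem_univ b)

variable (σ : Finpartition (univ : Finset α)) {N : ℕ}

/-- extend a function on parts of `σ` to a function on `α`. -/
noncomputable def extFun {β : Type*} (g : ↥σ.parts → β) : α → β :=
  fun x => g ⟨σ.part x, σ.part_mem.2 (mem_univ x)⟩

/-- the coarsening of `σ` induced by `g`. -/
noncomputable def coarsen {β : Type*} (g : ↥σ.parts → β) : Finpartition (univ : Finset α) :=
  kerPart (extFun σ g)

lemma le_coarsen {β : Type*} (g : ↥σ.parts → β) : σ ≤ coarsen σ g := by
  intro A hA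
  obtain ⟨a, ha⟩ := σ.nonempty_of_mem_parts hA
  refine ⟨(coarsen σ g).part a, (coarsen σ g).part_mem.2 (mem_univ a), ?_⟩
  intro b hb
  rw [coarsen, mem_part_kerPart]
  exact congrArg g (Subtype.ext (by
    show σ.part a = σ.part b
    rw [σ.part_eq_of_mem hA ha, σ.part_eq_of_mem hA hb]))

end ResampAux

namespace ResampAux

variable {α : Type*} [Fintype α] [DecidableEq α]
variable (σ : Finpartition (univ : Finset α)) {N : ℕ}
variable (π : Finpartition (univ : Finset α))

/-- extract the function on σ-parts from an embedding of π-parts. -/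
noncomputable def gE (e : ↥π.parts ↪ Fin N) : ↥σ.parts → Fin N :=
  fun A => e ⟨π.part (σ.nonempty_of_mem_parts A.2).choose, π.part_mem.2 (mem_univ _)⟩

/-- extract the embedding on π-parts from a function on σ-parts. -/
noncomputable def eG (g : ↥σ.parts → Fin N) : ↥π.parts → Fin N :=
  fun B => extFun σ g (π.nonempty_of_mem_parts B.2).choose

lemma extFun_gE (hπ : σ ≤ π) (e : ↥π.parts ↪ Fin N) (x : α) :
    extFun σ (gE σ π e) x = e ⟨π.part x, π.part_mem.2 (mem_univ x)⟩ := by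
  unfold extFun gE
  set A : ↥σ.parts := ⟨σ.part x, σ.part_mem.2 (mem_univ x)⟩ with hA
  have hc : (σ.nonempty_of_mem_parts A.2).choose ∈ σ.part x :=
    (σ.nonempty_of_mem_parts A.2).choose_spec
  obtain ⟨B, hB, hsub⟩ := hπ A.2
  have h1 : π.part (σ.nonempty_of_mem_parts A.2).choose = B :=
    π.part_eq_of_mem hB (hsub hc)
  have h2 : π.part x = B := π.part_eq_of_mem hB (hsub (σ.mem_part (mem_univ x)))
  exact congrArg e (Subtype.ext (h1.trans h2.symm))

lemma coarsen_gE (hπ : σ ≤ π) (e : ↥π.parts ↪ Fin N) : coarsen σ (gE σ π e) = π := by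
  apply finpartition_ext_part
  intro x
  ext b
  rw [show coarsen σ (gE σ π e) = kerPart (extFun σ (gE σ π e)) from rfl,
    mem_part_kerPart, extFun_gE σ π hπ e, extFun_gE σ π hπ e]
  constructor
  · intro h
    have h2 : π.part x = π.part b := Subtype.ext_iff.mp (e.injective h)
    exact (Finpartition.mem_part_iff_part_eq_part π (mem_univ b) (mem_univ x)).mpr h2.symm
  · intro h
    have h2 := (Finpartition.mem_part_iff_part_eq_part π (mem_univ b) (mem_univ x)).mp h
    exact congrArg e (Subtype.ext h2.symm)

lemma eG_injective {g : ↥σ.parts → Fin N} (hg : coarsen σ g = π) :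
    Function.Injective (eG σ π g) := by
  intro B B' h
  unfold eG at h
  have hB : B.1 ∈ (coarsen σ g).parts := by rw [hg]; exact B.2
  have hB' : B'.1 ∈ (coarsen σ g).parts := by rw [hg]; exact B'.2
  have hcB : (π.nonempty_of_mem_parts B.2).choose ∈ B.1 :=
    (π.nonempty_of_mem_parts B.2).choose_spec
  have hcB' : (π.nonempty_of_mem_parts B'.2).choose ∈ B'.1 :=
    (π.nonempty_of_mem_parts B'.2).choose_spec
  have e1 : (coarsen σ g).part (π.nonempty_of_mem_parts B.2).choose = B.1 :=
    (coarsen σ g).part_eq_of_mem hB hcB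
  have e1' : (coarsen σ g).part (π.nonempty_of_mem_parts B'.2).choose = B'.1 :=
    (coarsen σ g).part_eq_of_mem hB' hcB'
  have := (part_kerPart_eq_iff (F := extFun σ g)).mpr h
  exact Subtype.ext (by rw [← e1, ← e1']; exact this)

lemma gE_eG {g : ↥σ.parts → Fin N} (hg : coarsen σ g = π) :
    gE σ π (⟨eG σ π g, eG_injective σ π hg⟩ : ↥π.parts ↪ Fin N) = g := by
  funext A
  unfold gE
  show eG σ π g ⟨π.part (σ.nonempty_of_mem_parts A.2).choose, _⟩ = g A
  unfold eG
  set a := (σ.nonempty_of_mem_parts A.2).choose with ha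
  have haA : a ∈ A.1 := (σ.nonempty_of_mem_parts A.2).choose_spec
  set B : ↥π.parts := ⟨π.part a, π.part_mem.2 (mem_univ a)⟩ with hB
  set c := (π.nonempty_of_mem_parts B.2).choose with hc
  have hcB : c ∈ π.part a := (π.nonempty_of_mem_parts B.2).choose_spec
  have hcker : c ∈ (kerPart (extFun σ g)).part a := by
    rw [show kerPart (extFun σ g) = coarsen σ g from rfl, hg]; exact hcB
  have hFc : extFun σ g a = extFun σ g c := mem_part_kerPart.mp hcker
  rw [← hFc]
  show extFun σ g a = g A
  unfold extFun
  exact congrArg g (Subtype.ext (σ.part_eq_of_mem A.2 haA))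

lemma eG_gE (hπ : σ ≤ π) (e : ↥π.parts ↪ Fin N) :
    eG σ π (gE σ π e) = ⇑e := by
  funext B
  unfold eG
  rw [extFun_gE σ π hπ e]
  exact congrArg e (Subtype.ext
    (π.part_eq_of_mem B.2 (π.nonempty_of_mem_parts B.2).choose_spec))

/-- The fibers of `coarsen` are equivalent to embeddings of parts. -/
noncomputable def fiberEquiv (hπ : σ ≤ π) :
    {g : ↥σ.parts → Fin N // coarsen σ g = π} ≃ (↥π.parts ↪ Fin N) where
  toFun gh := ⟨eG σ π gh.1, eG_injective σ π gh.2⟩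
  invFun e := ⟨gE σ π e, coarsen_gE σ π hπ e⟩
  left_inv gh := Subtype.ext (gE_eG σ π gh.2)
  right_inv e := Function.Embedding.ext (fun B => by
    rw [show ((⟨eG σ π (gE σ π e), _⟩ : ↥π.parts ↪ Fin N) B) = eG σ π (gE σ π e) B from rfl,
      eG_gE σ π hπ e])

end ResampAux

namespace ResampAux

variable {α : Type*} [Fintype α] [DecidableEq α]

lemma sum_descFactorial (N : ℕ) (σ : Finpartition (univ : Finset α)) :
    ∑ π : Finpartition (univ : Finset α),
      (if σ ≤ π then N.descFactorial π.parts.card else 0) = N ^ σ.parts.card := by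
  have h1 : N ^ σ.parts.card = Fintype.card (↥σ.parts → Fin N) := by
    rw [Fintype.card_fun, Fintype.card_fin, Fintype.card_coe]
  have h2 : Fintype.card (↥σ.parts → Fin N)
      = ∑ π : {π : Finpartition (univ : Finset α) // σ ≤ π},
          Fintype.card {g : ↥σ.parts → Fin N // coarsen σ g = π.1} := by
    rw [← Fintype.card_sigma]
    exact Fintype.card_congr ((Equiv.sigmaFiberEquiv
      (fun g : ↥σ.parts → Fin N => (⟨coarsen σ g, le_coarsen σ g⟩ :
        {π : Finpartition (univ : Finset α) // σ ≤ π}))).symm.trans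
      (Equiv.sigmaCongrRight (fun π => Equiv.subtypeEquivRight (fun g => by
        simp [Subtype.ext_iff]))))
  have h3 : ∀ π : {π : Finpartition (univ : Finset α) // σ ≤ π},
      Fintype.card {g : ↥σ.parts → Fin N // coarsen σ g = π.1}
        = N.descFactorial π.1.parts.card := by
    intro π
    rw [Fintype.card_congr (fiberEquiv σ π.1 π.2), Fintype.card_embedding_eq,
      Fintype.card_fin, Fintype.card_coe]
  calc ∑ π : Finpartition (univ : Finset α), (if σ ≤ π then N.descFactorial π.parts.card else 0)
      = ∑ π ∈ univ.filter (fun π => σ ≤ π), N.descFactorial π.parts.card :=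
        (Finset.sum_filter _ _).symm
    _ = ∑ π : {π : Finpartition (univ : Finset α) // σ ≤ π}, N.descFactorial π.1.parts.card :=
        Finset.sum_subtype _ (fun π => by simp) _
    _ = ∑ π : {π : Finpartition (univ : Finset α) // σ ≤ π},
          Fintype.card {g : ↥σ.parts → Fin N // coarsen σ g = π.1} :=
        Finset.sum_congr rfl (fun π _ => (h3 π).symm)
    _ = Fintype.card (↥σ.parts → Fin N) := h2.symm
    _ = N ^ σ.parts.card := h1.symm

end ResampAux

namespace ResampAux

lemma opNormL1_eq_of {ι : Type*} [Fintype ι] [Nonempty ι] (A : Matrix ι ι ℝ) (C : ℝ)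
    (hcol : ∀ σ, ∑ π, |A π σ| ≤ C) (σ₀ : ι) (hC : ∑ π, |A π σ₀| = C) :
    opNormL1 A = C := by
  have hbound : ∀ f : ι → ℝ, (∑ π, |A.mulVec f π|) ≤ C * ∑ π, |f π| := by
    intro f
    calc ∑ π, |A.mulVec f π| ≤ ∑ π, ∑ σ, |A π σ| * |f σ| := by
          apply Finset.sum_le_sum; intro π _
          show |∑ σ, A π σ * f σ| ≤ _
          refine (Finset.abs_sum_le_sum_abs _ _).trans_eq ?_
          simp [abs_mul]
      _ = ∑ σ, (∑ π, |A π σ|) * |f σ| := by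
          rw [Finset.sum_comm]; simp [Finset.sum_mul]
      _ ≤ ∑ σ, C * |f σ| := by
          apply Finset.sum_le_sum; intro σ _
          exact mul_le_mul_of_nonneg_right (hcol σ) (abs_nonneg _)
      _ = C * ∑ π, |f π| := by rw [Finset.mul_sum]
  have hratio : ∀ f : {f : ι → ℝ // f ≠ 0},
      (∑ π, |A.mulVec (f : ι → ℝ) π|) / (∑ π, |(f : ι → ℝ) π|) ≤ C := by
    rintro ⟨f, hf⟩
    have hpos : 0 < ∑ π, |f π| := by
      obtain ⟨i, hi⟩ := Function.ne_iff.mp hf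
      exact Finset.sum_pos' (fun j _ => abs_nonneg _) ⟨i, Finset.mem_univ i, abs_pos.mpr hi⟩
    rw [div_le_iff₀ hpos]
    exact hbound f
  set f₀ : ι → ℝ := fun τ => if τ = σ₀ then 1 else 0 with hf₀
  have hf₀ne : f₀ ≠ 0 := by
    intro h
    have := congrFun h σ₀
    simp [hf₀] at this
  have hsum : ∑ π, |f₀ π| = 1 := by
    simp only [hf₀, apply_ite abs, abs_one, abs_zero]
    rw [Finset.sum_ite_eq' univ σ₀ (fun _ => (1:ℝ))]
    simp
  have hmv : ∀ π, A.mulVec f₀ π = A π σ₀ := by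
    intro π
    show ∑ σ, A π σ * f₀ σ = A π σ₀
    simp only [hf₀, mul_ite, mul_one, mul_zero]
    exact Finset.sum_ite_eq' univ σ₀ (fun σ => A π σ) |>.trans (by simp)
  have hval : (∑ π, |A.mulVec f₀ π|) / (∑ π, |f₀ π|) = C := by
    rw [hsum, div_one]
    simp only [hmv]
    exact hC
  have : Nonempty {f : ι → ℝ // f ≠ 0} := ⟨⟨f₀, hf₀ne⟩⟩
  refine le_antisymm (ciSup_le hratio) ?_
  rw [← hval]
  exact le_ciSup ⟨C, by rintro x ⟨f, rfl⟩; exact hratio f⟩ (⟨f₀, hf₀ne⟩ : {f : ι → ℝ // f ≠ 0})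

end ResampAux

namespace ResampAux

lemma resampS_nonneg (N m : ℕ) (π σ : Finpartition (univ : Finset (Fin m))) :
    0 ≤ resampS N m π σ := by
  unfold resampS; split
  · positivity
  · exact le_refl 0

lemma sum_col (N : ℕ) {m : ℕ} (hN : 0 < N) (σ : Finpartition (univ : Finset (Fin m))) :
    ∑ π, resampS N m π σ = 1 := by
  have key := sum_descFactorial N σ
  have h2 : ∑ π, resampS N m π σ
      = ((∑ π : Finpartition (univ : Finset (Fin m)),
          if σ ≤ π then N.descFactorial π.parts.card else 0 : ℕ) : ℝ) / (N:ℝ) ^ σ.parts.card := by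
    rw [Nat.cast_sum, Finset.sum_div]
    apply Finset.sum_congr rfl
    intro π _
    unfold resampS
    split <;> simp
  rw [h2, key]
  push_cast
  rw [div_self (pow_ne_zero _ (Nat.cast_ne_zero.mpr hN.ne'))]

lemma resampS_diag (N : ℕ) {m : ℕ} (σ : Finpartition (univ : Finset (Fin m))) :
    resampS N m σ σ = (N.descFactorial σ.parts.card : ℝ) / (N:ℝ) ^ σ.parts.card := by
  unfold resampS; rw [if_pos le_rfl]

lemma diag_le_one (N : ℕ) {m : ℕ} (hN : 0 < N) (σ : Finpartition (univ : Finset (Fin m))) :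
    resampS N m σ σ ≤ 1 := by
  rw [resampS_diag]
  rw [div_le_one (by positivity)]
  exact_mod_cast Nat.descFactorial_le_pow N σ.parts.card

lemma colabs (N : ℕ) {m : ℕ} (hN : 0 < N) (σ : Finpartition (univ : Finset (Fin m))) :
    ∑ π, |(1 - resampS N m) π σ|
      = 2 * (1 - (N.descFactorial σ.parts.card : ℝ) / (N:ℝ) ^ σ.parts.card) := by
  have hptwise : ∀ π, |(1 - resampS N m) π σ|
      = resampS N m π σ + (if π = σ then 1 - 2 * resampS N m σ σ else 0) := by
    intro π
    rw [Matrix.sub_apply, Matrix.one_apply]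
    by_cases h : π = σ
    · subst h
      rw [if_pos rfl, if_pos rfl, abs_of_nonneg (by linarith [diag_le_one N hN π])]
      ring
    · rw [if_neg h, if_neg h, zero_sub, abs_neg, abs_of_nonneg (resampS_nonneg N m π σ)]
      ring
  rw [Finset.sum_congr rfl (fun π _ => hptwise π), Finset.sum_add_distrib,
    sum_col N hN σ, Finset.sum_ite_eq' univ σ (fun _ => 1 - 2 * resampS N m σ σ)]
  rw [if_pos (mem_univ σ), resampS_diag]
  ring

lemma descRatio_mono_nat (N : ℕ) : ∀ {k n : ℕ}, k ≤ n →
    N.descFactorial n * N ^ k ≤ N.descFactorial k * N ^ n := by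
  intro k n h
  induction n, h using Nat.le_induction with
  | base => exact le_refl _
  | succ n hn ih =>
    rw [Nat.descFactorial_succ, pow_succ]
    calc (N - n) * N.descFactorial n * N ^ k ≤ N * (N.descFactorial n * N ^ k) := by
          rw [mul_assoc]; exact Nat.mul_le_mul_right _ (Nat.sub_le N n)
      _ ≤ N * (N.descFactorial k * N ^ n) := Nat.mul_le_mul_left _ ih
      _ = N.descFactorial k * (N ^ n * N) := by ring

lemma descRatio_mono (N : ℕ) (hN : 0 < N) {k n : ℕ} (h : k ≤ n) :
    (N.descFactorial n : ℝ) / (N:ℝ) ^ n ≤ (N.descFactorial k : ℝ) / (N:ℝ) ^ k := by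
  rw [div_le_div_iff₀ (by positivity) (by positivity)]
  exact_mod_cast descRatio_mono_nat N h

lemma opNormL1_resampS (N m : ℕ) (hm : 1 ≤ m) (hN : 0 < N) :
    opNormL1 (1 - resampS N m) = 2 * (1 - (N.descFactorial m : ℝ) / (N:ℝ) ^ m) := by
  have : Nonempty (Finpartition (univ : Finset (Fin m))) := ⟨⊥⟩
  apply opNormL1_eq_of _ _ ?_ (⊥ : Finpartition (univ : Finset (Fin m)))
  · rw [colabs N hN ⊥, Finpartition.card_bot, Finset.card_univ, Fintype.card_fin]
  · intro σ
    rw [colabs N hN σ]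
    have hk : σ.parts.card ≤ m := by
      have := σ.card_parts_le_card
      rwa [Finset.card_univ, Fintype.card_fin] at this
    have := descRatio_mono N hN hk
    linarith

end ResampAux


namespace ResampAux

lemma descFactorial_ratio_le {N m : ℕ} (hm : 1 ≤ m) (hmN : m ≤ N) :
    (N.descFactorial m : ℝ) / (N : ℝ) ^ m
      ≤ Real.exp (-((∑ i ∈ range m, (i:ℝ)) / (N : ℝ))) := by
  have hN0 : 0 < (N:ℝ) := by
    have : 0 < N := lt_of_lt_of_le hm hmN
    exact_mod_cast this
  have hcast : (N.descFactorial m : ℝ) = ∏ i ∈ range m, ((N:ℝ) - i) := by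
    rw [Nat.descFactorial_eq_prod_range, Nat.cast_prod]
    apply Finset.prod_congr rfl
    intro i hi
    rw [Nat.cast_sub (le_trans (Nat.le_of_lt_succ (Nat.lt_succ_of_lt (mem_range.mp hi))) hmN)]
  have hratio : (N.descFactorial m : ℝ) / (N : ℝ) ^ m
      = ∏ i ∈ range m, (1 - (i:ℝ)/(N:ℝ)) := by
    rw [hcast, show ((N:ℝ)) ^ m = ∏ _i ∈ range m, (N:ℝ) by
      rw [Finset.prod_const, Finset.card_range], ← Finset.prod_div_distrib]
    apply Finset.prod_congr rfl
    intro i hi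
    rw [sub_div, div_self hN0.ne']
  rw [hratio]
  have hle : ∀ i ∈ range m, (1 - (i:ℝ)/(N:ℝ)) ≤ Real.exp (-((i:ℝ)/(N:ℝ))) := by
    intro i _
    have := Real.add_one_le_exp (-((i:ℝ)/(N:ℝ)))
    linarith
  have hnn : ∀ i ∈ range m, (0:ℝ) ≤ 1 - (i:ℝ)/(N:ℝ) := by
    intro i hi
    have hiN : (i:ℝ) ≤ (N:ℝ) := by
      exact_mod_cast le_trans (le_of_lt (mem_range.mp hi)) hmN
    rw [sub_nonneg, div_le_one hN0]
    exact hiN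
  calc ∏ i ∈ range m, (1 - (i:ℝ)/(N:ℝ))
      ≤ ∏ i ∈ range m, Real.exp (-((i:ℝ)/(N:ℝ))) := Finset.prod_le_prod hnn hle
    _ = Real.exp (∑ i ∈ range m, -((i:ℝ)/(N:ℝ))) := (Real.exp_sum _ _).symm
    _ = Real.exp (-((∑ i ∈ range m, (i:ℝ)) / (N : ℝ))) := by
        congr 1
        simp only [Finset.sum_neg_distrib, Finset.sum_div]

lemma ratio_tendsto (N : ℕ → ℕ) (hN : ∀ m, 1 ≤ m → m + 1 ≤ N m)
    (hquad : Tendsto (fun m : ℕ => (N m : ℝ) / (m:ℝ)^2) atTop (𝓝 0)) :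
    Tendsto (fun m : ℕ => ((N m).descFactorial m : ℝ) / (N m : ℝ) ^ m) atTop (𝓝 0) := by
  have hNpos : ∀ m : ℕ, 1 ≤ m → (0:ℝ) < N m := by
    intro m hm
    have := hN m hm
    have : 0 < N m := by omega
    exact_mod_cast this
  have hinv : Tendsto (fun m : ℕ => (m:ℝ)^2 / (N m : ℝ)) atTop atTop := by
    have hev : ∀ᶠ m : ℕ in atTop, (N m : ℝ) / (m:ℝ)^2 ∈ Set.Ioi (0:ℝ) := by
      filter_upwards [eventually_ge_atTop 1] with m hm
      have h1 : (0:ℝ) < N m := hNpos m hm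
      have h2 : (0:ℝ) < (m:ℝ)^2 := by
        have : (0:ℝ) < (m:ℝ) := by exact_mod_cast hm
        positivity
      exact div_pos h1 h2
    have h0 : Tendsto (fun m : ℕ => (N m : ℝ) / (m:ℝ)^2) atTop (𝓝[>] 0) :=
      tendsto_nhdsWithin_of_tendsto_nhds_of_eventually_within _ hquad hev
    have := h0.inv_tendsto_nhdsGT_zero
    apply this.congr
    intro m
    rw [Pi.inv_apply, inv_div]
  have hsumdiv : Tendsto (fun m : ℕ => (∑ i ∈ range m, (i:ℝ)) / (N m : ℝ)) atTop atTop := by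
    apply tendsto_atTop_mono' atTop
      (show ∀ᶠ m : ℕ in atTop, (m:ℝ)^2 / (N m : ℝ) / 4 ≤ (∑ i ∈ range m, (i:ℝ)) / (N m : ℝ) from ?_)
      (hinv.atTop_div_const (by norm_num))
    filter_upwards [eventually_ge_atTop 2] with m hm
    have hm1 : 1 ≤ m := le_trans (by norm_num) hm
    have hNm : (0:ℝ) < N m := hNpos m hm1
    have hsum : (∑ i ∈ range m, (i:ℝ)) * 2 = (m:ℝ) * ((m:ℝ) - 1) := by
      have hc := Finset.sum_range_id_mul_two m
      have h2 := congrArg (fun k : ℕ => (k:ℝ)) hc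
      push_cast [Nat.cast_sub hm1] at h2
      exact h2
    have hmR : (2:ℝ) ≤ (m:ℝ) := by exact_mod_cast hm
    rw [div_div, div_le_div_iff₀ (by positivity) hNm]
    nlinarith [hNm, hsum, hmR, mul_le_mul_of_nonneg_right hmR (le_of_lt hNm)]
  have hexp : Tendsto (fun m : ℕ => Real.exp (-((∑ i ∈ range m, (i:ℝ)) / (N m : ℝ))))
      atTop (𝓝 0) :=
    Real.tendsto_exp_atBot.comp (tendsto_neg_atTop_atBot.comp hsumdiv)
  apply squeeze_zero' ?_ ?_ hexp
  · filter_upwards with m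
    positivity
  · filter_upwards [eventually_ge_atTop 1] with m hm
    exact descFactorial_ratio_le hm (by have := hN m hm; omega)

end ResampAux

/-- If `N(m) ≥ m + 1` and `N(m)/m² → 0`, then `N(m)^{(m)}/N(m)^m → 0`, and consequently
`‖Id − S(N(m), m)‖₁ = 2·(1 − N(m)^{(m)}/N(m)^m) → 2`: no uniform linear convergence. -/
theorem no_uniform_linear_convergence (N : ℕ → ℕ)
    (hN : ∀ m : ℕ, 1 ≤ m → m + 1 ≤ N m)
    (hquad : Tendsto (fun m : ℕ => (N m : ℝ) / (m : ℝ) ^ 2) atTop (𝓝 0)) :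
    Tendsto (fun m : ℕ => ((N m).descFactorial m : ℝ) / (N m : ℝ) ^ m) atTop (𝓝 0) ∧
    (∀ m : ℕ, 1 ≤ m →
      opNormL1 (1 - resampS (N m) m) =
        2 * (1 - ((N m).descFactorial m : ℝ) / (N m : ℝ) ^ m)) ∧
    Tendsto (fun m : ℕ => opNormL1 (1 - resampS (N m) m)) atTop (𝓝 2) := by
  have h1 := ResampAux.ratio_tendsto N hN hquad
  have h2 : ∀ m : ℕ, 1 ≤ m →
      opNormL1 (1 - resampS (N m) m) =
        2 * (1 - ((N m).descFactorial m : ℝ) / (N m : ℝ) ^ m) := by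
    intro m hm
    exact ResampAux.opNormL1_resampS (N m) m hm (by have := hN m hm; omega)
  refine ⟨h1, h2, ?_⟩
  have h3 : Tendsto (fun m : ℕ => 2 * (1 - ((N m).descFactorial m : ℝ) / (N m : ℝ) ^ m))
      atTop (𝓝 2) := by
    have h4 : Tendsto (fun m : ℕ => 1 - ((N m).descFactorial m : ℝ) / (N m : ℝ) ^ m)
        atTop (𝓝 (1 - 0)) := (tendsto_const_nhds (x := (1:ℝ))).sub h1
    have h5 := h4.const_mul 2
    norm_num at h5
    exact h5
  apply Tendsto.congr' ?_ h3
  filter_upwards [eventually_ge_atTop 1] with m hm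
  exact (h2 m hm).symm
end

section
/- Let N ≥ m ≥ 1 be integers and let S be the resampling matrix on ℝ^{Π(m)}. Then the matrix powers (Id − S)^k converge to the zero matrix as k → ∞ (entrywise). Consequently the iterated bootstrap converges to an unbiased estimator for moment polynomials of order m whenever N ≥ m. -/
open Finset Filter
open scoped Classical Topology

section PartAux

variable {α : Type*} [DecidableEq α] {s : Finset α}

theorem finpartition_eq_of_le_of_card_le {σ π : Finpartition s} (h : σ ≤ π)
    (hcard : σ.parts.card ≤ π.parts.card) : σ = π := by
  have hch : ∀ c : {c // c ∈ σ.parts}, ∃ b : {b // b ∈ π.parts}, (c : Finset α) ⊆ b := by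
    rintro ⟨c, hc⟩
    obtain ⟨b, hb, hcb⟩ := h hc
    exact ⟨⟨b, hb⟩, hcb⟩
  choose F hF using hch
  have hsurj : Function.Surjective F := by
    rintro ⟨b, hb⟩
    obtain ⟨x, hx⟩ := π.nonempty_of_mem_parts hb
    have hxs : x ∈ s := π.le hb hx
    obtain ⟨c, hc, hxc⟩ := σ.exists_mem hxs
    refine ⟨⟨c, hc⟩, Subtype.ext ?_⟩
    exact π.eq_of_mem_parts (F ⟨c, hc⟩).2 hb (hF ⟨c, hc⟩ hxc) hx
  have hbij : Function.Bijective F := by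
    rw [Fintype.bijective_iff_surjective_and_card]
    refine ⟨hsurj, ?_⟩
    simpa [Fintype.card_coe] using le_antisymm hcard (Finpartition.card_mono h)
  have hsub : π.parts ⊆ σ.parts := by
    intro b hb
    obtain ⟨⟨c, hc⟩, hFc⟩ := hsurj ⟨b, hb⟩
    have hcb : c ⊆ b := by
      have := hF ⟨c, hc⟩
      rwa [hFc] at this
    have hbc : b ⊆ c := by
      intro x hx
      have hxs : x ∈ s := π.le hb hx
      obtain ⟨c', hc', hxc'⟩ := σ.exists_mem hxs
      have h1 : F ⟨c', hc'⟩ = ⟨b, hb⟩ :=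
        Subtype.ext (π.eq_of_mem_parts (F ⟨c', hc'⟩).2 hb (hF ⟨c', hc'⟩ hxc') hx)
      have h2 : (⟨c', hc'⟩ : {c // c ∈ σ.parts}) = ⟨c, hc⟩ :=
        hbij.injective (h1.trans hFc.symm)
      have : c' = c := congrArg Subtype.val h2
      rwa [this] at hxc'
    have : b = c := Finset.Subset.antisymm hbc hcb
    rwa [this]
  have hparts : π.parts = σ.parts := Finset.eq_of_subset_of_card_le hsub hcard
  exact Finpartition.ext hparts.symm

theorem finpartition_card_lt_of_le_of_ne {σ π : Finpartition s} (h : σ ≤ π) (hne : σ ≠ π) :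
    π.parts.card < σ.parts.card :=
  lt_of_le_of_ne (Finpartition.card_mono h) fun hc =>
    hne (finpartition_eq_of_le_of_card_le h hc.ge)

end PartAux

lemma descFactorial_pos' {N k : ℕ} (h : k ≤ N) : 0 < N.descFactorial k := by
  induction k with
  | zero => simp
  | succ n ih =>
    rw [Nat.descFactorial_succ]
    exact Nat.mul_pos (by omega) (ih (by omega))

lemma descFactorial_ratio (N : ℕ) {k l : ℕ} (h : k ≤ l) :
    N.descFactorial l * N ^ k ≤ N.descFactorial k * N ^ l := by
  induction l, h using Nat.le_induction with
  | base => rfl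
  | succ l hkl ih =>
    rw [Nat.descFactorial_succ, pow_succ]
    calc (N - l) * N.descFactorial l * N ^ k
        ≤ N * (N.descFactorial l * N ^ k) := by
          rw [Nat.mul_assoc]
          exact Nat.mul_le_mul_right _ (Nat.sub_le _ _)
      _ ≤ N * (N.descFactorial k * N ^ l) := Nat.mul_le_mul_left _ ih
      _ = N.descFactorial k * (N ^ l * N) := by ring

set_option maxHeartbeats 1000000 in
/-- For `N ≥ m ≥ 1`, the powers `(Id − S)^k` converge (entrywise) to the zero matrix:
the iterated bootstrap converges to an unbiased estimator. -/
theorem iterated_bootstrap_unbiased_limit (N m : ℕ) (hm : 1 ≤ m) (hN : m ≤ N) :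
    Tendsto (fun k : ℕ => (1 - resampS N m) ^ k) atTop
      (𝓝 (0 : Matrix (Finpartition (Finset.univ : Finset (Fin m)))
        (Finpartition (Finset.univ : Finset (Fin m))) ℝ)) := by
  have hN0 : 0 < N := le_trans hm hN
  have hNR : (0:ℝ) < (N:ℝ) := by exact_mod_cast hN0
  set ι := Finpartition (Finset.univ : Finset (Fin m)) with hι
  set A : Matrix ι ι ℝ := 1 - resampS N m with hA
  -- cardinality facts
  have hc1 : ∀ π : ι, 1 ≤ π.parts.card := by
    intro π
    refine Finset.card_pos.mpr (π.parts_nonempty ?_)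
    have : Nonempty (Fin m) := Fin.pos_iff_nonempty.mp (by omega)
    simpa [Finset.bot_eq_empty] using (Finset.univ_nonempty (α := Fin m)).ne_empty
  have hcm : ∀ π : ι, π.parts.card ≤ m := by
    intro π
    simpa using π.card_parts_le_card
  -- the minimal diagonal entry δ
  set δ : ℝ := (N.descFactorial m : ℝ) / (N : ℝ) ^ m with hδ
  have hδ0 : 0 < δ := div_pos (by exact_mod_cast descFactorial_pos' hN) (by positivity)
  have hδ1 : δ ≤ 1 := by
    rw [div_le_one (by positivity)]
    exact_mod_cast Nat.descFactorial_le_pow N m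
  have hs_le : ∀ k : ℕ, (N.descFactorial k : ℝ) / (N : ℝ) ^ k ≤ 1 := by
    intro k
    rw [div_le_one (by positivity)]
    exact_mod_cast Nat.descFactorial_le_pow N k
  have hs_ge : ∀ k : ℕ, k ≤ m → δ ≤ (N.descFactorial k : ℝ) / (N : ℝ) ^ k := by
    intro k hk
    rw [hδ, div_le_div_iff₀ (by positivity) (by positivity)]
    exact_mod_cast descFactorial_ratio N hk
  -- the scaling parameter
  set n : ℕ := Fintype.card ι with hn
  have hnpos : 0 < n := Fintype.card_pos_iff.mpr ⟨⊥⟩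
  set ε : ℝ := min 1 (δ / (2 * n)) with hε
  have hε0 : 0 < ε := lt_min one_pos (by positivity)
  have hε1 : ε ≤ 1 := min_le_left _ _
  set d : ι → ℝ := fun π => ε ^ π.parts.card with hd
  have hd0 : ∀ π, 0 < d π := fun π => pow_pos hε0 _
  set D : Matrix ι ι ℝ := Matrix.diagonal d with hD
  set D' : Matrix ι ι ℝ := Matrix.diagonal (fun π => (d π)⁻¹) with hD'
  have hDD' : D * D' = 1 := by
    rw [hD, hD', Matrix.diagonal_mul_diagonal]
    have : (fun π : ι => d π * (d π)⁻¹) = fun _ => (1:ℝ) := by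
      funext π; exact mul_inv_cancel₀ (hd0 π).ne'
    rw [this, Matrix.diagonal_one]
  have hD'D : D' * D = 1 := by
    rw [hD, hD', Matrix.diagonal_mul_diagonal]
    have : (fun π : ι => (d π)⁻¹ * d π) = fun _ => (1:ℝ) := by
      funext π; exact inv_mul_cancel₀ (hd0 π).ne'
    rw [this, Matrix.diagonal_one]
  set B : Matrix ι ι ℝ := D' * A * D with hB
  have hBapp : ∀ π σ, B π σ = (d π)⁻¹ * A π σ * d σ := by
    intro π σ
    rw [hB, hD, hD', Matrix.mul_diagonal, Matrix.diagonal_mul]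
  -- diagonal entries of A
  have hAdiag : ∀ π : ι, A π π = 1 - (N.descFactorial π.parts.card : ℝ) / (N:ℝ)^π.parts.card := by
    intro π
    rw [hA, Matrix.sub_apply, Matrix.one_apply_eq, resampS, if_pos le_rfl]
  -- off-diagonal entries
  have hAoff : ∀ π σ : ι, σ ≠ π → A π σ = -(resampS N m π σ) := by
    intro π σ h
    rw [hA, Matrix.sub_apply, Matrix.one_apply_ne (Ne.symm h), zero_sub]
  -- the row-sum bound on B
  set r : ℝ := 1 - δ / 2 with hr
  have hr0 : 0 ≤ r := by rw [hr]; linarith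
  have hr1 : r < 1 := by rw [hr]; linarith
  have hrow : ∀ π : ι, ∑ σ, |B π σ| ≤ r := by
    intro π
    rw [← Finset.add_sum_erase Finset.univ _ (Finset.mem_univ π)]
    have hdiag : |B π π| ≤ 1 - δ := by
      have : B π π = A π π := by
        rw [hBapp, mul_comm, ← mul_assoc, mul_inv_cancel₀ (hd0 π).ne', one_mul]
      rw [this, hAdiag]
      have h1 := hs_le π.parts.card
      have h2 := hs_ge π.parts.card (hcm π)
      rw [abs_of_nonneg (by linarith)]
      linarith
    have hoff : ∀ σ ∈ Finset.univ.erase π, |B π σ| ≤ ε := by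
      intro σ hσ
      have hσπ : σ ≠ π := Finset.ne_of_mem_erase hσ
      by_cases hle : σ ≤ π
      · have hcard : π.parts.card < σ.parts.card :=
          finpartition_card_lt_of_le_of_ne hle hσπ
        have hSle : resampS N m π σ ≤ 1 := by
          rw [resampS, if_pos hle]
          rw [div_le_one (by positivity)]
          calc (N.descFactorial π.parts.card : ℝ) ≤ (N:ℝ) ^ π.parts.card := by
                exact_mod_cast Nat.descFactorial_le_pow N π.parts.card
            _ ≤ (N:ℝ) ^ σ.parts.card := by
                apply pow_le_pow_right₀ (by exact_mod_cast hN0) hcard.le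
        have hS0 : 0 ≤ resampS N m π σ := by
          rw [resampS, if_pos hle]; positivity
        have hdd : (d π)⁻¹ * d σ ≤ ε := by
          rw [hd]
          rw [inv_mul_le_iff₀ (pow_pos hε0 _)]
          calc ε ^ σ.parts.card ≤ ε ^ (π.parts.card + 1) :=
                pow_le_pow_of_le_one hε0.le hε1 hcard
            _ = ε ^ π.parts.card * ε := pow_succ ε _
        have : |B π σ| = ((d π)⁻¹ * d σ) * resampS N m π σ := by
          rw [hBapp, hAoff π σ hσπ]
          rw [abs_of_nonpos (by
            have := (hd0 π); have := (hd0 σ)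
            have h1 : (d π)⁻¹ * -(resampS N m π σ) * d σ ≤ 0 := by
              apply mul_nonpos_of_nonpos_of_nonneg _ (hd0 σ).le
              exact mul_nonpos_of_nonneg_of_nonpos (by positivity) (by linarith)
            exact h1)]
          ring
        rw [this]
        calc ((d π)⁻¹ * d σ) * resampS N m π σ ≤ ((d π)⁻¹ * d σ) * 1 := by
              apply mul_le_mul_of_nonneg_left hSle (by positivity)
          _ ≤ ε := by rw [mul_one]; exact hdd
      · have : B π σ = 0 := by
          rw [hBapp, hAoff π σ hσπ, resampS, if_neg hle]
          ring
        rw [this]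
        simpa using hε0.le
    have hsum : ∑ σ ∈ Finset.univ.erase π, |B π σ| ≤ (n : ℝ) * ε := by
      calc ∑ σ ∈ Finset.univ.erase π, |B π σ| ≤ ∑ _σ ∈ Finset.univ.erase π, ε :=
            Finset.sum_le_sum hoff
        _ = ((Finset.univ.erase π).card : ℝ) * ε := by rw [Finset.sum_const, nsmul_eq_mul]
        _ ≤ (n : ℝ) * ε := by
            apply mul_le_mul_of_nonneg_right _ hε0.le
            exact_mod_cast Finset.card_le_card (Finset.erase_subset _ _)
    have hnε : (n : ℝ) * ε ≤ δ / 2 := by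
      have : ε ≤ δ / (2 * n) := min_le_right _ _
      have hn' : (0:ℝ) < n := by exact_mod_cast hnpos
      calc (n : ℝ) * ε ≤ (n : ℝ) * (δ / (2 * n)) := by
            apply mul_le_mul_of_nonneg_left this hn'.le
        _ = δ / 2 := by field_simp
    rw [hr]; linarith
  -- the row-sum bound on powers
  have hpow : ∀ k : ℕ, ∀ π : ι, ∑ σ, |(B ^ k) π σ| ≤ r ^ k := by
    intro k
    induction k with
    | zero =>
      intro π
      simp only [pow_zero]
      have : ∀ σ : ι, |(1 : Matrix ι ι ℝ) π σ| = if π = σ then 1 else 0 := by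
        intro σ
        rw [Matrix.one_apply]
        split <;> simp
      rw [Finset.sum_congr rfl fun σ _ => this σ]
      simp
      refine le_of_eq ?_
      exact (Finset.sum_eq_single_of_mem (f := fun σ : ι => if π = σ then (1:ℝ) else 0) π
        (Finset.mem_univ π) (fun b _ hb => if_neg (Ne.symm hb))).trans (if_pos rfl)
    | succ k ih =>
      intro π
      rw [pow_succ']
      calc ∑ σ, |(B * B ^ k) π σ|
          ≤ ∑ σ, ∑ τ, |B π τ| * |(B ^ k) τ σ| := by
            apply Finset.sum_le_sum
            intro σ _
            rw [Matrix.mul_apply]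
            refine le_trans (Finset.abs_sum_le_sum_abs _ _) ?_
            apply Finset.sum_le_sum
            intro τ _
            rw [abs_mul]
        _ = ∑ τ, |B π τ| * ∑ σ, |(B ^ k) τ σ| := by
            rw [Finset.sum_comm]
            congr 1
            funext τ
            rw [Finset.mul_sum]
        _ ≤ ∑ τ, |B π τ| * r ^ k := by
            apply Finset.sum_le_sum
            intro τ _
            exact mul_le_mul_of_nonneg_left (ih τ) (abs_nonneg (B π τ))
        _ = (∑ τ, |B π τ|) * r ^ k := by rw [Finset.sum_mul]
        _ ≤ r * r ^ k := mul_le_mul_of_nonneg_right (hrow π) (pow_nonneg hr0 _)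
        _ = r ^ (k + 1) := by rw [pow_succ]; ring
  -- conjugation identity
  have hA' : A = D * B * D' := by
    rw [hB]
    calc A = (D * D') * A * (D * D') := by rw [hDD', Matrix.one_mul, Matrix.mul_one]
      _ = D * (D' * A * D) * D' := by simp only [Matrix.mul_assoc]
  have hconj : ∀ k : ℕ, A ^ k = D * B ^ k * D' := by
    intro k
    induction k with
    | zero => rw [pow_zero, pow_zero, Matrix.mul_one, hDD']
    | succ k ih =>
      rw [pow_succ, pow_succ, ih, hA']
      calc D * B ^ k * D' * (D * B * D')
          = D * B ^ k * (D' * D) * (B * D') := by simp only [Matrix.mul_assoc]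
        _ = D * B ^ k * (B * D') := by rw [hD'D, Matrix.mul_one]
        _ = D * (B ^ k * B) * D' := by simp only [Matrix.mul_assoc]
  -- entrywise bound on A ^ k
  have hentry : ∀ k : ℕ, ∀ π σ : ι, |(A ^ k) π σ| ≤ (d π * (d σ)⁻¹) * r ^ k := by
    intro k π σ
    have h1 : (A ^ k) π σ = d π * (B ^ k) π σ * (d σ)⁻¹ := by
      rw [hconj k, hD, hD', Matrix.mul_diagonal, Matrix.diagonal_mul]
    rw [h1]
    have hBk : |(B ^ k) π σ| ≤ r ^ k := by
      refine le_trans ?_ (hpow k π)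
      exact Finset.single_le_sum (f := fun τ => |(B ^ k) π τ|) (fun τ _ => abs_nonneg _) (Finset.mem_univ σ)
    calc |d π * (B ^ k) π σ * (d σ)⁻¹|
        = (d π * (d σ)⁻¹) * |(B ^ k) π σ| := by
          rw [abs_mul, abs_mul, abs_of_pos (hd0 π), abs_of_pos (inv_pos.mpr (hd0 σ))]
          ring
      _ ≤ (d π * (d σ)⁻¹) * r ^ k := by
          apply mul_le_mul_of_nonneg_left hBk (by positivity)
  -- conclude entrywise convergence
  refine tendsto_pi_nhds.mpr ?_
  intro π
  rw [tendsto_pi_nhds]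
  intro σ
  have hlim : Tendsto (fun k : ℕ => (d π * (d σ)⁻¹) * r ^ k) atTop (𝓝 0) := by
    have := (tendsto_pow_atTop_nhds_zero_of_lt_one hr0 hr1).const_mul (d π * (d σ)⁻¹)
    simpa using this
  have h0 : (0 : Matrix ι ι ℝ) π σ = 0 := rfl
  rw [h0]
  apply squeeze_zero_norm _ hlim
  intro k
  simpa [Real.norm_eq_abs] using hentry k π σ
end
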